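/- arXiv:0908.0107 — 8 statements merged into one kernel-verified Lean document; each statement's English description precedes it below -/
import Mathlib

section
/- Let R be a commutative Noetherian local ring and I an ideal of R. Then the nonfree locus of R/I, i.e., the set of primes p such that (R/I)_p is not a free R_p-module, equals V(I + (0 : I)), the set of primes containing I + ann_R(I). -/
/-- The nonfree locus of a module: the set of primes `p` such that `M_p` is
not a free `R_p`-module. -/
def nonfreeLocus (R : Type) [CommRing R] (M : Type) [AddCommGroup M]
    [Module R M] : Set (PrimeSpectrum R) :=
  { p | ¬ Module.Free (Localization.AtPrime p.asIdeal)
      (LocalizedModule p.asIdeal.primeCompl M) }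

/-- Over any commutative ring, `R ⧸ J` is free iff `J = ⊥` or `J = ⊤`. -/
lemma free_quotient_iff {A : Type*} [CommRing A] (J : Ideal A) :
    Module.Free A (A ⧸ J) ↔ J = ⊥ ∨ J = ⊤ := by
  constructor
  · intro h
    by_cases htop : J = ⊤
    · exact Or.inr htop
    refine Or.inl ?_
    have : Nontrivial (A ⧸ J) :=
      not_subsingleton_iff_nontrivial.mp fun h =>
        htop (Submodule.Quotient.subsingleton_iff.mp h)
    let b := Module.Free.chooseBasis A (A ⧸ J)
    obtain ⟨i⟩ := b.index_nonempty
    refine (Submodule.eq_bot_iff J).mpr fun r hr => ?_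
    have hsmul : r • b i = 0 := by
      obtain ⟨x, hx⟩ := Submodule.Quotient.mk_surjective J (b i)
      rw [← hx, ← Submodule.Quotient.mk_smul, Submodule.Quotient.mk_eq_zero]
      rw [smul_eq_mul]
      exact J.mul_mem_right x hr
    have := congrArg (fun v => b.repr v i) hsmul
    simpa [map_smul, Module.Basis.repr_self] using this
  · rintro (rfl | rfl)
    · exact Module.Free.of_equiv (Submodule.quotEquivOfEqBot ⊥ rfl).symm
    · have : Subsingleton (A ⧸ (⊤ : Ideal A)) :=
        Submodule.Quotient.subsingleton_iff.mpr rfl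
      infer_instance

/-- the nonfree locus of `R/I` equals `V(I + (0 : I))`. -/
theorem nonfreeLocus_quotient_eq_zeroLocus
    (R : Type) [CommRing R] [IsLocalRing R] [IsNoetherianRing R]
    (I : Ideal R) :
    nonfreeLocus R (R ⧸ I) =
      PrimeSpectrum.zeroLocus ((I ⊔ Submodule.annihilator I : Ideal R) : Set R) := by
  classical
  ext p
  set Rₚ := Localization.AtPrime p.asIdeal with hRₚ
  set f : R →ₗ[R] Rₚ := Algebra.linearMap R Rₚ with hf
  set J : Ideal Rₚ := I.localized' Rₚ p.asIdeal.primeCompl f with hJ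
  have hmem : p ∈ nonfreeLocus R (R ⧸ I) ↔ ¬ Module.Free Rₚ (Rₚ ⧸ J) := by
    have := Module.mem_freeLocus_of_isLocalization (M := R ⧸ I) p Rₚ (Rₚ ⧸ J)
      (I.toLocalizedQuotient' Rₚ p.asIdeal.primeCompl f)
    exact not_iff_not.mpr this
  have hbot : J = ⊥ ↔ ¬ (Submodule.annihilator I ≤ p.asIdeal) := by
    constructor
    · intro h hle
      obtain ⟨T, hT⟩ := IsNoetherian.noetherian I
      have key : ∀ x ∈ T, ∃ s : p.asIdeal.primeCompl, (s : R) * x = 0 := by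
        intro x hx
        have hxI : x ∈ I := hT ▸ Submodule.subset_span hx
        have : f x ∈ J := by
          exact ⟨x, hxI, 1, by rw [IsLocalizedModule.mk'_one]⟩
        rw [h, Submodule.mem_bot] at this
        have : algebraMap R Rₚ x = 0 := this
        exact IsLocalization.map_eq_zero_iff p.asIdeal.primeCompl Rₚ x |>.mp this
      choose sf hsf using key
      set s : R := ∏ x ∈ T.attach, (sf x x.2 : R) with hs
      have hsP : s ∈ p.asIdeal.primeCompl :=
        Submonoid.prod_mem _ fun x _ => (sf x x.2).2
      have hann : s ∈ Submodule.annihilator I := by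
        rw [Submodule.mem_annihilator]
        intro n hn
        rw [← hT] at hn
        have hsub : (T : Set R) ⊆ (LinearMap.ker (LinearMap.lsmul R R s) : Set R) := by
          intro x hx
          simp only [SetLike.mem_coe, LinearMap.mem_ker, LinearMap.lsmul_apply, smul_eq_mul]
          have := Finset.prod_erase_mul T.attach (fun y => (sf y y.2 : R))
            (Finset.mem_attach T ⟨x, hx⟩)
          rw [hs, ← this, mul_assoc, hsf x hx, mul_zero]
        have := Submodule.span_le.mpr hsub hn
        simpa using this
      exact hsP (hle hann)
    · intro h
      obtain ⟨s, hsann, hsp⟩ := Set.not_subset.mp h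
      rw [eq_bot_iff]
      rintro _ ⟨m, hm, t, rfl⟩
      rw [Submodule.mem_bot, IsLocalizedModule.mk'_eq_zero' f t]
      exact ⟨⟨s, hsp⟩, by
        have := Submodule.mem_annihilator.mp hsann m hm
        simpa [Submonoid.smul_def] using this⟩
  have htop : J = ⊤ ↔ ¬ (I ≤ p.asIdeal) := by
    constructor
    · intro h hle
      have h1 : (1 : Rₚ) ∈ J := h ▸ Submodule.mem_top
      obtain ⟨m, hm, t, hmt⟩ := h1
      rw [IsLocalizedModule.mk'_eq_iff] at hmt
      have : algebraMap R Rₚ m = algebraMap R Rₚ (t : R) := by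
        rw [show algebraMap R Rₚ m = f m from rfl, hmt, Submonoid.smul_def, Algebra.smul_def,
          mul_one]
      obtain ⟨c, hc⟩ := (IsLocalization.eq_iff_exists p.asIdeal.primeCompl Rₚ).mp this
      have hcm : (c : R) * m ∈ p.asIdeal := p.asIdeal.mul_mem_left _ (hle hm)
      rw [hc] at hcm
      exact (c * t).2 hcm
    · intro h
      obtain ⟨x, hxI, hxp⟩ := Set.not_subset.mp h
      have hx : algebraMap R Rₚ x ∈ J := ⟨x, hxI, 1, by rw [IsLocalizedModule.mk'_one]; rfl⟩
      exact Ideal.eq_top_of_isUnit_mem _ hx (IsLocalization.map_units (M := p.asIdeal.primeCompl) Rₚ ⟨x, hxp⟩)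
  rw [hmem, free_quotient_iff, PrimeSpectrum.mem_zeroLocus]
  rw [not_or, hbot, htop, not_not, not_not]
  constructor
  · rintro ⟨h1, h2⟩
    exact Set.Subset.trans (by exact_mod_cast SetLike.coe_subset_coe.mpr (sup_le h2 h1)) (le_refl _)
  · intro h
    have := (sup_le_iff).mp (by exact_mod_cast SetLike.coe_subset_coe.mp h)
    exact ⟨this.2, this.1⟩
end

section
/- Let R be a commutative Noetherian local ring and p a prime ideal of R such that the local ring R_p is not a field. Then the nonfree locus of R/p equals V(p), the set of primes containing p. -/
/-- if `p` is a prime such that `R_p` is not a field, then the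
nonfree locus of `R/p` equals `V(p)`. -/
theorem nonfreeLocus_quotient_prime_eq_zeroLocus
    (R : Type) [CommRing R] [IsLocalRing R] [IsNoetherianRing R]
    (p : PrimeSpectrum R)
    (hp : ¬ IsField (Localization.AtPrime p.asIdeal)) :
    nonfreeLocus R (R ⧸ p.asIdeal) =
      PrimeSpectrum.zeroLocus (p.asIdeal : Set R) := by
  ext q
  simp only [nonfreeLocus, Set.mem_setOf_eq, PrimeSpectrum.mem_zeroLocus, SetLike.coe_subset_coe]
  constructor
  · -- ¬ Free → p ≤ q, by contraposition
    intro hnf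
    by_contra hle
    apply hnf
    obtain ⟨s, hs, hsq⟩ := SetLike.not_le_iff_exists.mp hle
    have : Subsingleton (LocalizedModule q.asIdeal.primeCompl (R ⧸ p.asIdeal)) := by
      rw [LocalizedModule.subsingleton_iff]
      intro m
      refine ⟨s, hsq, ?_⟩
      obtain ⟨x, rfl⟩ := Ideal.Quotient.mk_surjective m
      show s • Ideal.Quotient.mk p.asIdeal x = 0
      rw [show s • Ideal.Quotient.mk p.asIdeal x = Ideal.Quotient.mk p.asIdeal (s * x) from rfl]
      exact (Ideal.Quotient.eq_zero_iff_mem).mpr (p.asIdeal.mul_mem_right x hs)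
    infer_instance
  · intro hle hfree
    rcases subsingleton_or_nontrivial
        (LocalizedModule q.asIdeal.primeCompl (R ⧸ p.asIdeal)) with hsub | hnt
    · -- subsingleton case: 1 is killed by some s ∉ q, but then s ∈ p ≤ q
      obtain ⟨s, hs, hs0⟩ := LocalizedModule.subsingleton_iff.mp hsub (1 : R ⧸ p.asIdeal)
      have : s ∈ p.asIdeal := by
        have h1 : s • (1 : R ⧸ p.asIdeal) = Ideal.Quotient.mk p.asIdeal s := by
          rw [show (1 : R ⧸ p.asIdeal) = Ideal.Quotient.mk p.asIdeal 1 from rfl,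
            show s • Ideal.Quotient.mk p.asIdeal 1 = Ideal.Quotient.mk p.asIdeal (s * 1) from rfl,
            mul_one]
        rw [h1] at hs0
        exact (Ideal.Quotient.eq_zero_iff_mem).mp hs0
      exact hs (hle this)
    · -- nontrivial free case: p maps to zero in R_q, hence in R_p, so R_p is a field
      have key : ∀ a ∈ p.asIdeal,
          algebraMap R (Localization.AtPrime q.asIdeal) a = 0 := by
        intro a ha
        set A := Localization.AtPrime q.asIdeal
        let b := Module.Free.chooseBasis A
          (LocalizedModule q.asIdeal.primeCompl (R ⧸ p.asIdeal))
        obtain ⟨i⟩ : Nonempty (Module.Free.ChooseBasisIndex A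
          (LocalizedModule q.asIdeal.primeCompl (R ⧸ p.asIdeal))) := inferInstance
        have hsmul : (algebraMap R A a) • b i = 0 := by
          have : ∀ x : LocalizedModule q.asIdeal.primeCompl (R ⧸ p.asIdeal),
              (algebraMap R A a) • x = 0 := by
            intro x
            induction x using LocalizedModule.induction_on with
            | h m t =>
              rw [algebraMap_smul, LocalizedModule.smul'_mk]
              have hm : a • m = 0 := by
                obtain ⟨y, rfl⟩ := Ideal.Quotient.mk_surjective m
                show a • Ideal.Quotient.mk p.asIdeal y = 0
                rw [show a • Ideal.Quotient.mk p.asIdeal y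
                    = Ideal.Quotient.mk p.asIdeal (a * y) from rfl]
                exact (Ideal.Quotient.eq_zero_iff_mem).mpr (p.asIdeal.mul_mem_right y ha)
              rw [hm, LocalizedModule.zero_mk]
          exact this _
        have h2 := b.repr.map_smul (algebraMap R A a) (b i)
        rw [hsmul, map_zero, b.repr_self] at h2
        have h3 := congrArg (fun f => f i) h2.symm
        simpa [Algebra.smul_def] using h3
      -- transfer to R_p
      have keyp : ∀ a ∈ p.asIdeal,
          algebraMap R (Localization.AtPrime p.asIdeal) a = 0 := by
        intro a ha
        obtain ⟨⟨s, hs⟩, hsa⟩ :=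
          (IsLocalization.map_eq_zero_iff q.asIdeal.primeCompl
            (Localization.AtPrime q.asIdeal) a).mp (key a ha)
        refine (IsLocalization.map_eq_zero_iff p.asIdeal.primeCompl
            (Localization.AtPrime p.asIdeal) a).mpr ⟨⟨s, fun h => hs (hle h)⟩, hsa⟩
      apply hp
      rw [IsLocalRing.isField_iff_maximalIdeal_eq,
        ← Localization.AtPrime.map_eq_maximalIdeal]
      rw [Ideal.map_eq_bot_iff_le_ker]
      intro a ha
      exact keyp a ha
end

section
/- Let R be a commutative Noetherian local ring. A full subcategory X of finitely generated R-modules (closed under isomorphism) containing R and closed under direct summands and extensions is closed under kernels of epimorphisms if and only if it is closed under taking syzygies. -/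
open CategoryTheory IsLocalRing

noncomputable section

variable (R : Type) [CommRing R] [IsLocalRing R]

set_option linter.unusedSectionVars false
set_option maxHeartbeats 1000000

lemma extend_single {n : ℕ} (i : Fin (n+1)) (k : Fin n) :
    Function.extend i.succAbove (Pi.single k (1:R)) 0 = Pi.single (i.succAbove k) 1 := by
  funext j
  by_cases hj : ∃ k', i.succAbove k' = j
  · obtain ⟨k', rfl⟩ := hj
    rw [Function.Injective.extend_apply (Fin.succAbove_right_injective)]
    by_cases h : k = k'
    · subst h; simp
    · rw [Pi.single_eq_of_ne (Ne.symm h), Pi.single_eq_of_ne]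
      exact fun hc => h (Fin.succAbove_right_injective hc).symm
  · rw [Function.extend_apply' _ _ _ hj, Pi.single_eq_of_ne]
    · rfl
    · exact fun hc => hj ⟨k, hc.symm⟩

lemma pi_eq_sum_single {n : ℕ} (x : Fin n → R) :
    x = ∑ i, x i • (Pi.single i (1:R) : Fin n → R) := by
  conv_lhs => rw [← Finset.univ_sum_single x]
  congr 1; funext i
  rw [← Pi.single_smul, smul_eq_mul, mul_one]

lemma mem_smul_top {n : ℕ} (x : Fin n → R) (hx : ∀ i, x i ∈ maximalIdeal R) :
    x ∈ (maximalIdeal R) • (⊤ : Submodule R (Fin n → R)) := by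
  rw [pi_eq_sum_single R x]
  exact Submodule.sum_mem _ fun i _ => Submodule.smul_mem_smul (hx i) trivial

/-- If `f : R^n → M` is surjective with `n` minimal, then `ker f ≤ m • ⊤`. -/
lemma ker_le_of_minimal {M : Type} [AddCommGroup M] [Module R M] {n : ℕ}
    (f : (Fin n → R) →ₗ[R] M) (hf : Function.Surjective f)
    (hmin : ∀ m < n, ∀ g : (Fin m → R) →ₗ[R] M, ¬ Function.Surjective g) :
    LinearMap.ker f ≤ (maximalIdeal R) • (⊤ : Submodule R (Fin n → R)) := by
  intro x hx
  refine mem_smul_top R x fun i => ?_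
  by_contra hi
  have hxi : IsUnit (x i) := not_not.mp (by rwa [IsLocalRing.mem_maximalIdeal] at hi)
  cases n with
  | zero => exact i.elim0
  | succ m =>
    set g : (Fin m → R) →ₗ[R] M := f.comp (Function.ExtendByZero.linearMap R i.succAbove)
      with hg
    refine hmin m (Nat.lt_succ_self m) g ?_
    rw [← LinearMap.range_eq_top]
    have hgen : ∀ j : Fin (m+1), j ≠ i → f (Pi.single j 1) ∈ LinearMap.range g := by
      intro j hj
      obtain ⟨k, rfl⟩ := Fin.exists_succAbove_eq hj
      refine ⟨Pi.single k 1, ?_⟩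
      show f (Function.ExtendByZero.linearMap R i.succAbove (Pi.single k 1)) = _
      exact congrArg f (extend_single R i k)
    have hgi : f (Pi.single i 1) ∈ LinearMap.range g := by
      have h0 : (x i) • f (Pi.single i 1)
          = - ∑ j ∈ Finset.univ.erase i, x j • f (Pi.single j 1) := by
        have := LinearMap.mem_ker.mp hx
        rw [pi_eq_sum_single R x] at this
        rw [map_sum] at this
        simp only [map_smul] at this
        rw [← Finset.add_sum_erase _ _ (Finset.mem_univ i)] at this
        exact eq_neg_of_add_eq_zero_left this
      have hsum : (x i) • f (Pi.single i 1) ∈ LinearMap.range g := by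
        rw [h0]
        exact neg_mem (Submodule.sum_mem _ fun j hj =>
          Submodule.smul_mem _ _ (hgen j (Finset.ne_of_mem_erase hj)))
      obtain ⟨u, hu⟩ := hxi
      have : f (Pi.single i 1) = (↑u⁻¹ : R) • ((x i) • f (Pi.single i 1)) := by
        rw [smul_smul, ← hu, Units.inv_mul, one_smul]
      rw [this]
      exact Submodule.smul_mem _ _ hsum
    rw [eq_top_iff]
    rintro c -
    obtain ⟨y, rfl⟩ := hf c
    rw [pi_eq_sum_single R y, map_sum]
    refine Submodule.sum_mem _ fun j _ => ?_
    rw [map_smul]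
    by_cases hji : j = i
    · subst hji; exact Submodule.smul_mem _ _ hgi
    · exact Submodule.smul_mem _ _ (hgen j hji)

lemma exists_minimal_cover (M : Type) [AddCommGroup M] [Module R M] [Module.Finite R M] :
    ∃ (n : ℕ) (f : (Fin n → R) →ₗ[R] M), Function.Surjective f ∧
      LinearMap.ker f ≤ (maximalIdeal R) • (⊤ : Submodule R (Fin n → R)) := by
  classical
  have hP : ∃ n : ℕ, ∃ f : (Fin n → R) →ₗ[R] M, Function.Surjective f := by
    obtain ⟨n, s, hs⟩ := Module.Finite.exists_fin (R := R) (M := M)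
    refine ⟨n, (Pi.basisFun R (Fin n)).constr R s, ?_⟩
    rw [← LinearMap.range_eq_top, ← top_le_iff, ← hs, Submodule.span_le]
    rintro _ ⟨i, rfl⟩
    exact ⟨Pi.single i 1, by simp [Pi.single_apply, ite_smul]⟩
  obtain ⟨f, hf⟩ := Nat.find_spec hP
  exact ⟨Nat.find hP, f, hf, ker_le_of_minimal R f hf
    (fun m hm g hg => Nat.find_min hP hm ⟨g, hg⟩)⟩

/-- Finite free modules belong to `S`. -/
lemma free_mem (S : Set (ModuleCat.{0} R))
    (hR : ModuleCat.of R R ∈ S)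
    (hsummand : ∀ A B C : ModuleCat.{0} R, A ∈ S →
      Nonempty (A ≃ₗ[R] (↥B × ↥C)) → B ∈ S)
    (hext : ∀ (A B C : ModuleCat.{0} R) (f : A →ₗ[R] B) (g : B →ₗ[R] C),
      Function.Injective f → Function.Surjective g →
      LinearMap.range f = LinearMap.ker g → A ∈ S → C ∈ S → B ∈ S) :
    ∀ n : ℕ, ModuleCat.of R (Fin n → R) ∈ S := by
  intro n
  induction n with
  | zero =>
    refine hsummand (ModuleCat.of R R) (ModuleCat.of R (Fin 0 → R)) (ModuleCat.of R R) hR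
      ⟨LinearEquiv.ofLinear (LinearMap.prod 0 LinearMap.id) (LinearMap.snd R _ R) ?_ ?_⟩
    · apply LinearMap.ext
      rintro ⟨a, b⟩
      exact Prod.ext (Subsingleton.elim _ _) rfl
    · rfl
  | succ m ih =>
    refine hext (ModuleCat.of R (Fin m → R)) (ModuleCat.of R (Fin (m+1) → R)) (ModuleCat.of R R)
      (Function.ExtendByZero.linearMap R (Fin.castSucc : Fin m → Fin (m+1)))
      (LinearMap.proj (Fin.last m)) ?_ ?_ ?_ ih hR
    · intro a b hab
      funext k
      have h1 : Function.extend Fin.castSucc a 0 (Fin.castSucc k)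
          = Function.extend Fin.castSucc b 0 (Fin.castSucc k) := congrFun hab _
      rwa [Function.Injective.extend_apply (Fin.castSucc_injective m),
        Function.Injective.extend_apply (Fin.castSucc_injective m)] at h1
    · intro r
      refine ⟨Pi.single (Fin.last m) r, ?_⟩
      exact Pi.single_eq_same (M := fun _ => R) (Fin.last m) r
    · ext y
      constructor
      · rintro ⟨z, rfl⟩
        show Function.extend Fin.castSucc z (0 : Fin (m+1) → R) (Fin.last m) = 0
        rw [Function.extend_apply']
        · rfl
        · rintro ⟨a, ha⟩
          exact (Fin.castSucc_lt_last a).ne ha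
      · intro hy
        refine ⟨fun k => y (Fin.castSucc k), ?_⟩
        show Function.extend Fin.castSucc (fun k => y (Fin.castSucc k)) (0 : Fin (m+1) → R) = y
        funext j
        refine Fin.lastCases ?_ ?_ j
        · rw [Function.extend_apply']
          · exact (LinearMap.mem_ker.mp hy).symm
          · rintro ⟨a, ha⟩
            exact (Fin.castSucc_lt_last a).ne ha
        · intro k
          rw [Function.Injective.extend_apply (Fin.castSucc_injective m)]

/-- `K` is (isomorphic to) the first syzygy of `M`, i.e. the kernel of a
minimal free cover of `M`. -/
def IsSyzygyOf (K M : ModuleCat.{0} R) : Prop :=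
  ∃ (n : ℕ) (f : (Fin n → R) →ₗ[R] M),
    Function.Surjective f ∧
    LinearMap.ker f ≤ (maximalIdeal R) • (⊤ : Submodule R (Fin n → R)) ∧
    Nonempty (K ≃ₗ[R] LinearMap.ker f)

/-- a subcategory of finitely generated modules containing `R`,
closed under isomorphisms, direct summands and extensions, is closed under
kernels of epimorphisms iff it is closed under syzygies. -/
theorem closed_under_ker_epi_iff_closed_under_syzygy
    [IsNoetherianRing R]
    (S : Set (ModuleCat.{0} R))
    (hfg : ∀ A ∈ S, Module.Finite R ↥A)
    (hiso : ∀ A B : ModuleCat.{0} R, A ∈ S → Nonempty (A ≃ₗ[R] B) → B ∈ S)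
    (hR : ModuleCat.of R R ∈ S)
    (hsummand : ∀ A B C : ModuleCat.{0} R, A ∈ S →
      Nonempty (A ≃ₗ[R] (↥B × ↥C)) → B ∈ S)
    (hext : ∀ (A B C : ModuleCat.{0} R) (f : A →ₗ[R] B) (g : B →ₗ[R] C),
      Function.Injective f → Function.Surjective g →
      LinearMap.range f = LinearMap.ker g → A ∈ S → C ∈ S → B ∈ S) :
    (∀ (A B C : ModuleCat.{0} R) (f : A →ₗ[R] B) (g : B →ₗ[R] C),
      Function.Injective f → Function.Surjective g →
      LinearMap.range f = LinearMap.ker g → B ∈ S → C ∈ S → A ∈ S) ↔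
    (∀ M ∈ S, ∀ K : ModuleCat.{0} R, IsSyzygyOf R K M → K ∈ S) := by
  constructor
  · -- kernels of epis ⇒ syzygies
    rintro h M hM K ⟨n, f, hsurj, -, ⟨e⟩⟩
    have hfree := free_mem R S hR hsummand hext n
    have hker_mem : ModuleCat.of R ↥(LinearMap.ker f) ∈ S :=
      h (ModuleCat.of R ↥(LinearMap.ker f)) (ModuleCat.of R (Fin n → R)) M
        ((LinearMap.ker f).subtype) f (Submodule.injective_subtype _) hsurj
        (Submodule.range_subtype _) hfree hM
    exact hiso _ K hker_mem ⟨e.symm⟩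
  · -- syzygies ⇒ kernels of epis
    intro h A B C f₀ g₀ hf₀ hg₀ hrange hB hC
    have hCfin : Module.Finite R ↥C := hfg C hC
    obtain ⟨n, f, hfsurj, hfker⟩ := exists_minimal_cover R ↥C
    have hK : ModuleCat.of R ↥(LinearMap.ker f) ∈ S :=
      h C hC _ ⟨n, f, hfsurj, hfker, ⟨LinearEquiv.refl R _⟩⟩
    -- the pullback of g₀ : B → C and f : Rⁿ → C
    set q : (↥B × (Fin n → R)) →ₗ[R] ↥C :=
      (g₀.comp (LinearMap.fst R ↥B (Fin n → R))) -
        (f.comp (LinearMap.snd R ↥B (Fin n → R))) with hq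
    set P : Submodule R (↥B × (Fin n → R)) := LinearMap.ker q with hP
    have hmemP : ∀ z : ↥B × (Fin n → R), z ∈ P ↔ g₀ z.1 = f z.2 := by
      intro z
      rw [hP, LinearMap.mem_ker, hq]
      simp [sub_eq_zero]
    -- projection to B
    set p1 : ↥P →ₗ[R] ↥B := (LinearMap.fst R ↥B (Fin n → R)).comp P.subtype with hp1
    have hp1surj : Function.Surjective p1 := by
      intro b
      obtain ⟨x, hx⟩ := hfsurj (g₀ b)
      exact ⟨⟨(b, x), (hmemP (b, x)).mpr hx.symm⟩, rfl⟩
    -- inclusion of ker f into P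
    have hjmem : ∀ k : ↥(LinearMap.ker f),
        ((0 : ↥B), (k : Fin n → R)) ∈ P := by
      intro k
      rw [hmemP]
      simp [k.2]
    set j : ↥(LinearMap.ker f) →ₗ[R] ↥P :=
      LinearMap.codRestrict P
        ((LinearMap.inr R ↥B (Fin n → R)).comp (LinearMap.ker f).subtype) hjmem with hj
    have hjinj : Function.Injective j := by
      intro k₁ k₂ hk
      have : ((0 : ↥B), (k₁ : Fin n → R)) = ((0 : ↥B), (k₂ : Fin n → R)) :=
        congrArg Subtype.val hk
      exact Subtype.ext (congrArg Prod.snd this)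
    have hjrange : LinearMap.range j = LinearMap.ker p1 := by
      ext z
      constructor
      · rintro ⟨k, rfl⟩
        rfl
      · intro hz
        have h1 : (z : ↥B × (Fin n → R)).1 = 0 := hz
        have h2 : f (z : ↥B × (Fin n → R)).2 = 0 := by
          have := (hmemP _).mp z.2
          rw [h1, map_zero] at this
          exact this.symm
        refine ⟨⟨(z : ↥B × (Fin n → R)).2, h2⟩, ?_⟩
        apply Subtype.ext
        exact Prod.ext h1.symm rfl
    have hE : ModuleCat.of R ↥P ∈ S :=
      hext (ModuleCat.of R ↥(LinearMap.ker f)) (ModuleCat.of R ↥P) B j p1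
        hjinj hp1surj hjrange hK hB
    -- projection to Rⁿ and its section
    set p2 : ↥P →ₗ[R] (Fin n → R) := (LinearMap.snd R ↥B (Fin n → R)).comp P.subtype
      with hp2
    classical
    set t : (Fin n → R) →ₗ[R] ↥B :=
      (Pi.basisFun R (Fin n)).constr R
        (fun i => Classical.choose (hg₀ (f (Pi.single i 1)))) with ht
    have hgt : g₀.comp t = f := by
      apply Module.Basis.ext (Pi.basisFun R (Fin n))
      intro i
      rw [LinearMap.comp_apply, ht, Module.Basis.constr_basis]
      have := Classical.choose_spec (hg₀ (f (Pi.single i 1)))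
      rw [this, Pi.basisFun_apply]
    have hsmem : ∀ x : Fin n → R, ((t x, x) : ↥B × (Fin n → R)) ∈ P := by
      intro x
      rw [hmemP]
      exact congrFun (congrArg DFunLike.coe hgt) x
    set s : (Fin n → R) →ₗ[R] ↥P :=
      LinearMap.codRestrict P (LinearMap.prod t LinearMap.id) hsmem with hs
    have hps : ∀ x, p2 (s x) = x := fun x => rfl
    -- splitting : P ≃ ker p2 × Rⁿ
    have hcod : ∀ z : ↥P, ((LinearMap.id : ↥P →ₗ[R] ↥P) - s.comp p2) z ∈ LinearMap.ker p2 := by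
      intro z
      rw [LinearMap.mem_ker]
      simp [hps]
    have e1 : ↥P ≃ₗ[R] (↥(LinearMap.ker p2) × (Fin n → R)) :=
      LinearEquiv.ofLinear
        (LinearMap.prod
          (LinearMap.codRestrict (LinearMap.ker p2) ((LinearMap.id : ↥P →ₗ[R] ↥P) - s.comp p2) hcod) p2)
        ((LinearMap.ker p2).subtype.comp (LinearMap.fst R _ _) +
          s.comp (LinearMap.snd R _ _))
        (by
      apply LinearMap.ext
      rintro ⟨k, x⟩
      have hk : p2 (k : ↥P) = 0 := k.2
      apply Prod.ext
      · apply Subtype.ext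
        show ((k : ↥P) + s x) - s (p2 ((k : ↥P) + s x)) = (k : ↥P)
        rw [map_add, hk, zero_add, hps]
        abel
      · show p2 ((k : ↥P) + s x) = x
        rw [map_add, hk, zero_add, hps])
        (by
      apply LinearMap.ext
      intro z
      show ((z - s (p2 z)) + s (p2 z)) = z
      abel)
    -- A ≃ ker p2
    have humem : ∀ b : ↥(LinearMap.ker g₀),
        (((b : ↥B), (0 : Fin n → R)) : ↥B × (Fin n → R)) ∈ P := by
      intro b
      rw [hmemP]
      simp [b.2]
    set u : ↥(LinearMap.ker g₀) →ₗ[R] ↥(LinearMap.ker p2) :=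
      LinearMap.codRestrict (LinearMap.ker p2)
        (LinearMap.codRestrict P
          ((LinearMap.inl R ↥B (Fin n → R)).comp (LinearMap.ker g₀).subtype) humem)
        (fun b => rfl) with hu
    have hvmem : ∀ z : ↥(LinearMap.ker p2),
        (((z : ↥P) : ↥B × (Fin n → R)).1) ∈ LinearMap.ker g₀ := by
      intro z
      have h2 : ((z : ↥P) : ↥B × (Fin n → R)).2 = 0 := z.2
      have := (hmemP _).mp (z : ↥P).2
      rw [LinearMap.mem_ker, this, h2, map_zero]
    set v : ↥(LinearMap.ker p2) →ₗ[R] ↥(LinearMap.ker g₀) :=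
      LinearMap.codRestrict (LinearMap.ker g₀)
        ((LinearMap.fst R ↥B (Fin n → R)).comp
          (P.subtype.comp (LinearMap.ker p2).subtype)) hvmem with hv
    have e2 : ↥(LinearMap.ker g₀) ≃ₗ[R] ↥(LinearMap.ker p2) :=
      LinearEquiv.ofLinear u v
        (by
      apply LinearMap.ext
      intro z
      apply Subtype.ext
      apply Subtype.ext
      apply Prod.ext
      · rfl
      · exact (z.2 : p2 (z : ↥P) = 0).symm)
        (by
      apply LinearMap.ext
      intro b
      apply Subtype.ext
      rfl)
    have eA : ↥A ≃ₗ[R] ↥(LinearMap.ker p2) :=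
      ((LinearEquiv.ofInjective f₀ hf₀).trans
        (LinearEquiv.ofEq (LinearMap.range f₀) (LinearMap.ker g₀) hrange)).trans e2
    have efin : ↥P ≃ₗ[R] (↥A × (Fin n → R)) :=
      e1.trans (LinearEquiv.prodCongr eA.symm (LinearEquiv.refl R (Fin n → R)))
    exact hsummand (ModuleCat.of R ↥P) A (ModuleCat.of R (Fin n → R)) hE ⟨efin⟩
end
end

section
/- Let S be a discrete valuation ring with maximal ideal generated by x, let n ≥ 1, and let R = S/(x^n). Then for each integer i with 1 ≤ i ≤ n−1 there exists a short exact sequence of R-modules 0 → R/(x^i) → R/(x^{i−1}) ⊕ R/(x^{i+1}) → R/(x^i) → 0, where x^0 = 1. -/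
theorem aux_ses (R : Type) [CommRing R] (t : R) (i : ℕ) (hi : 1 ≤ i)
    (hkey : ∀ r : R, r * t ∈ Ideal.span {t ^ (i + 1)} → r ∈ Ideal.span {t ^ i})
    (hkey2 : ∀ a b : R, a * t - b ∈ Ideal.span {t ^ i} →
      ∃ c : R, a - c ∈ Ideal.span {t ^ (i - 1)} ∧ c * t = b) :
    ∃ (f : R ⧸ Ideal.span {t ^ i} →ₗ[R]
        (R ⧸ Ideal.span {t ^ (i - 1)}) × (R ⧸ Ideal.span {t ^ (i + 1)}))
      (g : (R ⧸ Ideal.span {t ^ (i - 1)}) × (R ⧸ Ideal.span {t ^ (i + 1)}) →ₗ[R]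
        R ⧸ Ideal.span {t ^ i}),
      Function.Injective f ∧ Function.Surjective g ∧
      LinearMap.range f = LinearMap.ker g := by
  have hi' : i - 1 + 1 = i := Nat.succ_pred_eq_of_pos hi
  set I1 : Ideal R := Ideal.span {t ^ (i - 1)} with hI1
  set I2 : Ideal R := Ideal.span {t ^ i} with hI2
  set I3 : Ideal R := Ideal.span {t ^ (i + 1)} with hI3
  have h21 : ∀ r : R, r ∈ I2 → r ∈ I1 := by
    intro r hr
    rw [hI2, Ideal.mem_span_singleton] at hr
    rw [hI1, Ideal.mem_span_singleton]
    exact dvd_trans (pow_dvd_pow t (Nat.sub_le i 1)) hr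
  have h32 : ∀ r : R, r ∈ I3 → r ∈ I2 := by
    intro r hr
    rw [hI3, Ideal.mem_span_singleton] at hr
    rw [hI2, Ideal.mem_span_singleton]
    exact dvd_trans (pow_dvd_pow t (Nat.le_succ i)) hr
  have hmul12 : ∀ r : R, r ∈ I1 → r * t ∈ I2 := by
    intro r hr
    rw [hI1, Ideal.mem_span_singleton] at hr
    obtain ⟨c, rfl⟩ := hr
    rw [hI2, Ideal.mem_span_singleton]
    have htt : t ^ (i - 1) * t = t ^ i := by rw [← pow_succ, hi']
    exact ⟨c, by rw [← htt]; ring⟩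
  have hmul23 : ∀ r : R, r ∈ I2 → r * t ∈ I3 := by
    intro r hr
    rw [hI2, Ideal.mem_span_singleton] at hr
    obtain ⟨c, rfl⟩ := hr
    rw [hI3, Ideal.mem_span_singleton]
    exact ⟨c, by rw [pow_succ]; ring⟩
  -- multiplication by t
  let mulT : R →ₗ[R] R := LinearMap.toSpanSingleton R R t
  have hmulT : ∀ r : R, mulT r = r * t := fun r => by
    simp [mulT, LinearMap.toSpanSingleton_apply, smul_eq_mul]
  -- the map f
  let f0 : R →ₗ[R] (R ⧸ I1) × (R ⧸ I3) :=
    LinearMap.prod I1.mkQ (I3.mkQ.comp mulT)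
  have hf0 : I2 ≤ LinearMap.ker f0 := by
    intro r hr
    simp only [LinearMap.mem_ker, f0, LinearMap.prod_apply, LinearMap.comp_apply, Function.prod,
      Submodule.mkQ_apply, Prod.mk_eq_zero, Submodule.Quotient.mk_eq_zero, hmulT]
    exact ⟨h21 r hr, hmul23 r hr⟩
  let f : R ⧸ I2 →ₗ[R] (R ⧸ I1) × (R ⧸ I3) := Submodule.liftQ I2 f0 hf0
  have hfapp : ∀ r : R, f (Submodule.Quotient.mk r) =
      (Submodule.Quotient.mk r, Submodule.Quotient.mk (r * t)) := by
    intro r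
    rfl
  -- the map g
  let g1 : R ⧸ I1 →ₗ[R] R ⧸ I2 := Submodule.liftQ I1 (I2.mkQ.comp mulT) (by
    intro r hr
    simp only [LinearMap.mem_ker, LinearMap.comp_apply, Submodule.mkQ_apply,
      Submodule.Quotient.mk_eq_zero, hmulT]
    exact hmul12 r hr)
  let g2 : R ⧸ I3 →ₗ[R] R ⧸ I2 := Submodule.liftQ I3 I2.mkQ (by
    intro r hr
    simp only [LinearMap.mem_ker, Submodule.mkQ_apply, Submodule.Quotient.mk_eq_zero]
    exact h32 r hr)
  let g : (R ⧸ I1) × (R ⧸ I3) →ₗ[R] R ⧸ I2 := g1.coprod (-g2)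
  have hgapp : ∀ a b : R, g (Submodule.Quotient.mk a, Submodule.Quotient.mk b) =
      Submodule.Quotient.mk (a * t - b) := by
    intro a b
    simp only [g, g1, g2, LinearMap.coprod_apply, LinearMap.neg_apply,
      Submodule.liftQ_apply, LinearMap.comp_apply, Submodule.mkQ_apply, hmulT]
    rw [sub_eq_add_neg, Submodule.Quotient.mk_add, Submodule.Quotient.mk_neg]
  refine ⟨f, g, ?_, ?_, ?_⟩
  · -- injective
    rw [← LinearMap.ker_eq_bot, LinearMap.ker_eq_bot']
    intro m hm
    obtain ⟨r, rfl⟩ := Submodule.Quotient.mk_surjective I2 m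
    rw [hfapp] at hm
    obtain ⟨h1, h3⟩ := Prod.mk.injEq _ _ _ _ ▸ hm
    have h3' : r * t ∈ I3 := by
      rwa [← Submodule.Quotient.mk_eq_zero]
    rw [Submodule.Quotient.mk_eq_zero]
    exact hkey r h3'
  · -- surjective
    intro y
    obtain ⟨r, rfl⟩ := Submodule.Quotient.mk_surjective I2 y
    refine ⟨(Submodule.Quotient.mk 0, Submodule.Quotient.mk (-r)), ?_⟩
    rw [hgapp]
    congr 1
    ring
  · -- exactness
    apply le_antisymm
    · rintro y ⟨a, rfl⟩
      obtain ⟨r, rfl⟩ := Submodule.Quotient.mk_surjective I2 a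
      rw [LinearMap.mem_ker, hfapp, hgapp]
      simp
    · rintro ⟨a, b⟩ hy
      obtain ⟨ra, rfl⟩ := Submodule.Quotient.mk_surjective I1 a
      obtain ⟨rb, rfl⟩ := Submodule.Quotient.mk_surjective I3 b
      rw [LinearMap.mem_ker, hgapp, Submodule.Quotient.mk_eq_zero] at hy
      obtain ⟨c, hc1, hc2⟩ := hkey2 ra rb hy
      refine ⟨Submodule.Quotient.mk c, ?_⟩
      rw [hfapp, hc2]
      congr 1
      rw [Submodule.Quotient.eq]
      have h := I1.neg_mem hc1
      rwa [neg_sub] at h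

open IsLocalRing

/-- over `R = S/(xⁿ)`, `S` a DVR with uniformizer `x`, for each
`1 ≤ i ≤ n - 1` there is a short exact sequence
`0 → R/(xⁱ) → R/(xⁱ⁻¹) ⊕ R/(xⁱ⁺¹) → R/(xⁱ) → 0`. -/
theorem exists_ses_over_artinian_hypersurface
    (S : Type) [CommRing S] [IsDomain S] [IsDiscreteValuationRing S]
    (x : S) (hx : Ideal.span {x} = maximalIdeal S)
    (n : ℕ) (hn : 1 ≤ n) (i : ℕ) (hi1 : 1 ≤ i) (hi2 : i ≤ n - 1) :
    ∃ (f : (S ⧸ Ideal.span {x ^ n}) ⧸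
          Ideal.span {(Ideal.Quotient.mk (Ideal.span {x ^ n}) x) ^ i} →ₗ[S ⧸ Ideal.span {x ^ n}]
        ((S ⧸ Ideal.span {x ^ n}) ⧸
          Ideal.span {(Ideal.Quotient.mk (Ideal.span {x ^ n}) x) ^ (i - 1)}) ×
        ((S ⧸ Ideal.span {x ^ n}) ⧸
          Ideal.span {(Ideal.Quotient.mk (Ideal.span {x ^ n}) x) ^ (i + 1)}))
      (g : ((S ⧸ Ideal.span {x ^ n}) ⧸
          Ideal.span {(Ideal.Quotient.mk (Ideal.span {x ^ n}) x) ^ (i - 1)}) ×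
        ((S ⧸ Ideal.span {x ^ n}) ⧸
          Ideal.span {(Ideal.Quotient.mk (Ideal.span {x ^ n}) x) ^ (i + 1)}) →ₗ[S ⧸ Ideal.span {x ^ n}]
        (S ⧸ Ideal.span {x ^ n}) ⧸
          Ideal.span {(Ideal.Quotient.mk (Ideal.span {x ^ n}) x) ^ i}),
      Function.Injective f ∧ Function.Surjective g ∧
      LinearMap.range f = LinearMap.ker g := by
  have hin : i + 1 ≤ n := by omega
  have hi' : i - 1 + 1 = i := Nat.succ_pred_eq_of_pos hi1
  have hx0 : x ≠ 0 := by
    intro h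
    apply IsDiscreteValuationRing.not_a_field S
    rw [← hx, h, Ideal.span_singleton_eq_bot]
  set J : Ideal S := Ideal.span {x ^ n} with hJ
  set t : S ⧸ J := Ideal.Quotient.mk J x with ht
  have hmap : ∀ j : ℕ, j ≤ n → ∀ s : S,
      (Ideal.Quotient.mk J s ∈ Ideal.span {t ^ j} ↔ s ∈ Ideal.span {x ^ j}) := by
    intro j hj s
    have h1 : Ideal.span {t ^ j} = (Ideal.span {x ^ j}).map (Ideal.Quotient.mk J) := by
      rw [Ideal.map_span, Set.image_singleton, map_pow]
    have h2 : J ≤ Ideal.span {x ^ j} := by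
      rw [hJ]
      exact Ideal.span_singleton_le_span_singleton.mpr (pow_dvd_pow x hj)
    rw [h1, Ideal.mem_quotient_iff_mem h2]
  apply aux_ses (S ⧸ J) t i hi1
  · -- hkey
    intro r hr
    obtain ⟨s, rfl⟩ := Ideal.Quotient.mk_surjective r
    rw [ht, ← map_mul, hmap (i + 1) hin] at hr
    rw [Ideal.mem_span_singleton] at hr
    obtain ⟨c, hc⟩ := hr
    rw [hmap i (by omega), Ideal.mem_span_singleton]
    refine ⟨c, mul_right_cancel₀ hx0 ?_⟩
    rw [hc, pow_succ]
    ring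
  · -- hkey2
    intro a b hab
    obtain ⟨sa, rfl⟩ := Ideal.Quotient.mk_surjective a
    obtain ⟨sb, rfl⟩ := Ideal.Quotient.mk_surjective b
    rw [ht, ← map_mul, ← map_sub, hmap i (by omega), Ideal.mem_span_singleton] at hab
    obtain ⟨d, hd⟩ := hab
    refine ⟨Ideal.Quotient.mk J (sa - x ^ (i - 1) * d), ?_, ?_⟩
    · rw [← map_sub, sub_sub_cancel, hmap (i - 1) (by omega), Ideal.mem_span_singleton]
      exact dvd_mul_right _ _
    · rw [ht, ← map_mul]
      congr 1
      have htt : x ^ (i - 1) * x = x ^ i := by rw [← pow_succ, hi']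
      have h2 : (sa - x ^ (i - 1) * d) * x = sa * x - x ^ i * d := by
        rw [← htt]; ring
      rw [h2]
      linear_combination hd
end

section
/- Let R be a commutative Noetherian local ring, X a finitely generated R-module, and x an element of R that is both R-regular and X-regular. If a finitely generated R/(x)-module M belongs to the resolving closure res_{R/(x)}(X/xX) inside finitely generated R/(x)-modules, then the syzygy Ω_R M (of M viewed as an R-module) belongs to the resolving closure res_R(X). -/
open CategoryTheory IsLocalRing

noncomputable section

variable (R : Type) [CommRing R] [IsLocalRing R]

namespace Res13

section Helpers

variable {A : Type} [CommRing A]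

/-- Schanuel-style transfer: if `f, g` are two surjections onto `N` with sources in `S`
and `ker g ∈ S`, then `ker f ∈ S`, provided `S` is closed under extensions and
kernels of epimorphisms. -/
theorem kerTransfer (S : Set (ModuleCat.{0} A))
    (hext : ∀ (U V W : ModuleCat.{0} A) (f : U →ₗ[A] V) (g : V →ₗ[A] W),
      Function.Injective f → Function.Surjective g →
      LinearMap.range f = LinearMap.ker g → U ∈ S → W ∈ S → V ∈ S)
    (hker : ∀ (U V W : ModuleCat.{0} A) (f : U →ₗ[A] V) (g : V →ₗ[A] W),
      Function.Injective f → Function.Surjective g →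
      LinearMap.range f = LinearMap.ker g → V ∈ S → W ∈ S → U ∈ S)
    {P B N : Type} [AddCommGroup P] [Module A P] [AddCommGroup B] [Module A B]
    [AddCommGroup N] [Module A N]
    (f : P →ₗ[A] N) (g : B →ₗ[A] N) (hf : Function.Surjective f)
    (hg : Function.Surjective g)
    (hA : ModuleCat.of A P ∈ S) (hB : ModuleCat.of A B ∈ S)
    (hkg : ModuleCat.of A ↥(LinearMap.ker g) ∈ S) :
    ModuleCat.of A ↥(LinearMap.ker f) ∈ S := by
  set φ : (P × B) →ₗ[A] N :=
    f.comp (LinearMap.fst A P B) - g.comp (LinearMap.snd A P B) with hφ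
  set E := LinearMap.ker φ with hE
  have memE : ∀ p : P × B, p ∈ E ↔ f p.1 = g p.2 := by
    intro p
    simp [hE, hφ, LinearMap.mem_ker, sub_eq_zero]
  have h0 : ∀ b : LinearMap.ker g, (((0 : P), (b : B)) : P × B) ∈ E := by
    intro b
    rw [memE]
    simp [LinearMap.mem_ker.mp b.2]
  let ι : LinearMap.ker g →ₗ[A] E :=
    LinearMap.codRestrict E ((LinearMap.inr A P B).comp (LinearMap.ker g).subtype) h0
  have hι : Function.Injective ι := by
    intro a b hab
    have h1 := congrArg Prod.snd (congrArg Subtype.val hab)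
    exact Subtype.ext h1
  let π : E →ₗ[A] P := (LinearMap.fst A P B).comp E.subtype
  have hπ : Function.Surjective π := by
    intro a
    obtain ⟨b, hb⟩ := hg (f a)
    exact ⟨⟨(a, b), (memE _).2 hb.symm⟩, rfl⟩
  have hrange : LinearMap.range ι = LinearMap.ker π := by
    ext z
    obtain ⟨⟨a, b⟩, hab⟩ := z
    constructor
    · rintro ⟨c, hc⟩
      have h1 : a = 0 := (congrArg Prod.fst (congrArg Subtype.val hc)).symm
      show π ⟨(a, b), hab⟩ = 0
      simpa [π] using h1
    · intro hz
      have ha : a = 0 := hz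
      have hbk : b ∈ LinearMap.ker g := by
        rw [LinearMap.mem_ker]
        have := (memE (a, b)).1 hab
        rw [ha] at this
        simpa using this.symm
      refine ⟨⟨b, hbk⟩, Subtype.ext ?_⟩
      show ((0 : P), b) = (a, b)
      rw [ha]
  have hEmem : ModuleCat.of A ↥E ∈ S :=
    hext (ModuleCat.of A ↥(LinearMap.ker g)) (ModuleCat.of A ↥E) (ModuleCat.of A P)
      ι π hι hπ hrange hkg hA
  have h0' : ∀ a : LinearMap.ker f, (((a : P), (0 : B)) : P × B) ∈ E := by
    intro a
    rw [memE]
    simp [LinearMap.mem_ker.mp a.2]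
  let ι' : LinearMap.ker f →ₗ[A] E :=
    LinearMap.codRestrict E ((LinearMap.inl A P B).comp (LinearMap.ker f).subtype) h0'
  have hι' : Function.Injective ι' := by
    intro a b hab
    exact Subtype.ext (congrArg Prod.fst (congrArg Subtype.val hab))
  let π' : E →ₗ[A] B := (LinearMap.snd A P B).comp E.subtype
  have hπ' : Function.Surjective π' := by
    intro b
    obtain ⟨a, ha⟩ := hf (g b)
    exact ⟨⟨(a, b), (memE _).2 ha⟩, rfl⟩
  have hrange' : LinearMap.range ι' = LinearMap.ker π' := by
    ext z
    obtain ⟨⟨a, b⟩, hab⟩ := z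
    constructor
    · rintro ⟨c, hc⟩
      have h1 : b = 0 := (congrArg Prod.snd (congrArg Subtype.val hc)).symm
      show π' ⟨(a, b), hab⟩ = 0
      simpa [π'] using h1
    · intro hz
      have hb : b = 0 := hz
      have hak : a ∈ LinearMap.ker f := by
        rw [LinearMap.mem_ker]
        have := (memE (a, b)).1 hab
        rw [hb] at this
        simpa using this
      refine ⟨⟨a, hak⟩, Subtype.ext ?_⟩
      show ((a : P), (0 : B)) = (a, b)
      rw [hb]
  exact hker (ModuleCat.of A ↥(LinearMap.ker f)) (ModuleCat.of A ↥E) (ModuleCat.of A B)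
    ι' π' hι' hπ' hrange' hEmem hB

variable (A₀ Q₀ : Type) [CommRing A₀] [CommRing Q₀] [Algebra A₀ Q₀]
variable {V W : Type} [AddCommGroup V] [Module Q₀ V] [AddCommGroup W] [Module Q₀ W]

/-- A `Q₀`-linear map restricted to an `A₀`-linear map between the restricted modules. -/
def qToR (f : V →ₗ[Q₀] W) : RestrictScalars A₀ Q₀ V →ₗ[A₀] RestrictScalars A₀ Q₀ W where
  toFun v := (RestrictScalars.addEquiv A₀ Q₀ W).symm (f (RestrictScalars.addEquiv A₀ Q₀ V v))
  map_add' x y := by simp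
  map_smul' r v := by
    show (RestrictScalars.addEquiv A₀ Q₀ W).symm (f ((RestrictScalars.addEquiv A₀ Q₀ V) (r • v))) =
      (RingHom.id A₀) r • (RestrictScalars.addEquiv A₀ Q₀ W).symm
        (f ((RestrictScalars.addEquiv A₀ Q₀ V) v))
    rw [RestrictScalars.addEquiv_map_smul, map_smul, RingHom.id_apply,
      RestrictScalars.addEquiv_symm_map_algebraMap_smul]

@[simp] lemma qToR_apply (f : V →ₗ[Q₀] W) (v : V) : qToR A₀ Q₀ f v = f v := rfl

/-- A `Q₀`-linear equiv restricted to an `A₀`-linear equiv. -/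
def qToRE (e : V ≃ₗ[Q₀] W) : RestrictScalars A₀ Q₀ V ≃ₗ[A₀] RestrictScalars A₀ Q₀ W :=
  { qToR A₀ Q₀ e.toLinearMap with
    invFun := e.symm
    left_inv := e.left_inv
    right_inv := e.right_inv }

@[simp] lemma qToRE_apply (e : V ≃ₗ[Q₀] W) (v : V) : qToRE A₀ Q₀ e v = e v := rfl

/-- Products commute with restriction of scalars. -/
def prodRS :
    (RestrictScalars A₀ Q₀ V × RestrictScalars A₀ Q₀ W) ≃ₗ[A₀] RestrictScalars A₀ Q₀ (V × W) where
  toFun p := p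
  invFun p := p
  map_add' _ _ := rfl
  map_smul' _ _ := rfl
  left_inv _ := rfl
  right_inv _ := rfl

variable {n : ℕ}

/-- `A₀ × A₀^n ≃ A₀^(n+1)`. -/
def consEquiv : (A₀ × (Fin n → A₀)) ≃ₗ[A₀] (Fin (n + 1) → A₀) where
  toFun p := Fin.cons p.1 p.2
  invFun f := (f 0, fun i => f i.succ)
  map_add' p q := by
    funext i
    induction i using Fin.cases <;> simp
  map_smul' c p := by
    funext i
    induction i using Fin.cases <;> simp
  left_inv p := by simp
  right_inv f := by
    funext i
    induction i using Fin.cases <;> simp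

/-- `A₀ ≃ (Fin 0 → A₀) × A₀`. -/
def zeroProdEquiv : A₀ ≃ₗ[A₀] ((Fin 0 → A₀) × A₀) where
  toFun r := (0, r)
  invFun p := p.2
  map_add' _ _ := by simp
  map_smul' _ _ := by simp
  left_inv _ := rfl
  right_inv p := by
    refine Prod.ext ?_ rfl
    simp [Subsingleton.elim (0 : Fin 0 → A₀) p.1]

/-- A product of submodules is isomorphic to the product of each. -/
def subProdEquiv {M N : Type} [AddCommGroup M] [Module A₀ M] [AddCommGroup N] [Module A₀ N]
    (p : Submodule A₀ M) (q : Submodule A₀ N) : ↥(p.prod q) ≃ₗ[A₀] (↥p × ↥q) where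
  toFun z := (⟨z.1.1, (Submodule.mem_prod.mp z.2).1⟩, ⟨z.1.2, (Submodule.mem_prod.mp z.2).2⟩)
  invFun z := ⟨(z.1.1, z.2.1), Submodule.mem_prod.mpr ⟨z.1.2, z.2.2⟩⟩
  map_add' _ _ := rfl
  map_smul' _ _ := rfl
  left_inv _ := rfl
  right_inv _ := rfl

lemma ker_comp_inj {M N P : Type} [AddCommGroup M] [Module A₀ M] [AddCommGroup N] [Module A₀ N]
    [AddCommGroup P] [Module A₀ P] (f : M →ₗ[A₀] N) (g : N →ₗ[A₀] P)
    (hg : Function.Injective g) : LinearMap.ker (g ∘ₗ f) = LinearMap.ker f := by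
  rw [LinearMap.ker_comp, LinearMap.ker_eq_bot.mpr hg, Submodule.comap_bot]

instance rsModuleGroup (R₁ S₁ M₁ : Type) [CommSemiring R₁] [Semiring S₁] [AddCommGroup M₁]
    [Module S₁ M₁] [Algebra R₁ S₁] :
    @Module R₁ (RestrictScalars R₁ S₁ M₁) _ AddCommGroup.toAddCommMonoid :=
  RestrictScalars.module R₁ S₁ M₁

end Helpers

end Res13

open Pointwise in
set_option maxHeartbeats 1600000 in
/-- if `x` is `R`- and `X`-regular and the `R/(x)`-module `M`
lies in the resolving closure `res_{R/(x)}(X/xX)`, then `Ω_R M` lies in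
`res_R(X)`. -/
theorem syzygy_mem_res_closure_of_mem_res_closure_quotient
    [IsNoetherianRing R]
    (X : Type) [AddCommGroup X] [Module R X] [Module.Finite R X]
    (x : R) (hxR : IsSMulRegular R x) (hxX : IsSMulRegular X x)
    (M : ModuleCat.{0} (R ⧸ Ideal.span {x}))
    [Module.Finite (R ⧸ Ideal.span {x}) ↥M]
    (hM : ∀ T : Set (ModuleCat.{0} (R ⧸ Ideal.span {x})),
      (∀ A B : ModuleCat.{0} (R ⧸ Ideal.span {x}), A ∈ T →
        Nonempty (A ≃ₗ[R ⧸ Ideal.span {x}] B) → B ∈ T) →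
      (ModuleCat.of (R ⧸ Ideal.span {x}) (R ⧸ Ideal.span {x}) ∈ T) →
      (∀ A B C : ModuleCat.{0} (R ⧸ Ideal.span {x}), A ∈ T →
        Nonempty (A ≃ₗ[R ⧸ Ideal.span {x}] (↥B × ↥C)) → B ∈ T) →
      (∀ (A B C : ModuleCat.{0} (R ⧸ Ideal.span {x}))
        (f : A →ₗ[R ⧸ Ideal.span {x}] B) (g : B →ₗ[R ⧸ Ideal.span {x}] C),
        Function.Injective f → Function.Surjective g →
        LinearMap.range f = LinearMap.ker g → A ∈ T → C ∈ T → B ∈ T) →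
      (∀ (A B C : ModuleCat.{0} (R ⧸ Ideal.span {x}))
        (f : A →ₗ[R ⧸ Ideal.span {x}] B) (g : B →ₗ[R ⧸ Ideal.span {x}] C),
        Function.Injective f → Function.Surjective g →
        LinearMap.range f = LinearMap.ker g → B ∈ T → C ∈ T → A ∈ T) →
      ModuleCat.of (R ⧸ Ideal.span {x})
        (X ⧸ (Ideal.span {x} • (⊤ : Submodule R X))) ∈ T →
      M ∈ T)
    (K : ModuleCat.{0} R)
    (hK : IsSyzygyOf R K
      (@ModuleCat.of R _ (RestrictScalars R (R ⧸ Ideal.span {x}) ↥M) _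
        (RestrictScalars.module R (R ⧸ Ideal.span {x}) ↥M)))
    (S : Set (ModuleCat.{0} R))
    (hiso : ∀ A B : ModuleCat.{0} R, A ∈ S → Nonempty (A ≃ₗ[R] B) → B ∈ S)
    (hR : ModuleCat.of R R ∈ S)
    (hsummand : ∀ A B C : ModuleCat.{0} R, A ∈ S →
      Nonempty (A ≃ₗ[R] (↥B × ↥C)) → B ∈ S)
    (hext : ∀ (A B C : ModuleCat.{0} R) (f : A →ₗ[R] B) (g : B →ₗ[R] C),
      Function.Injective f → Function.Surjective g →
      LinearMap.range f = LinearMap.ker g → A ∈ S → C ∈ S → B ∈ S)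
    (hker : ∀ (A B C : ModuleCat.{0} R) (f : A →ₗ[R] B) (g : B →ₗ[R] C),
      Function.Injective f → Function.Surjective g →
      LinearMap.range f = LinearMap.ker g → B ∈ S → C ∈ S → A ∈ S)
    (hXS : ModuleCat.of R X ∈ S) :
    K ∈ S := by
  classical
  obtain ⟨n, fK, hfK, -, ⟨eK⟩⟩ := hK
  -- products of members of S are in S
  have hprod : ∀ (P B : Type) (_ : AddCommGroup P) (_ : Module R P)
      (_ : AddCommGroup B) (_ : Module R B),
      ModuleCat.of R P ∈ S → ModuleCat.of R B ∈ S → ModuleCat.of R (P × B) ∈ S := by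
    intro P B _ _ _ _ hP hB
    exact hext (ModuleCat.of R P) (ModuleCat.of R (P × B)) (ModuleCat.of R B)
      (LinearMap.inl R P B) (LinearMap.snd R P B) LinearMap.inl_injective
      LinearMap.snd_surjective (LinearMap.range_inl R P B) hP hB
  -- finite free modules are in S
  have hfree : ∀ m : ℕ, ModuleCat.of R (Fin m → R) ∈ S := by
    intro m
    induction m with
    | zero =>
      exact hsummand (ModuleCat.of R R) (ModuleCat.of R (Fin 0 → R)) (ModuleCat.of R R) hR
        ⟨Res13.zeroProdEquiv R⟩
    | succ m ih =>
      have h1 := hprod R (Fin m → R) inferInstance inferInstance inferInstance inferInstance hR ih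
      exact hiso _ _ h1 ⟨Res13.consEquiv R⟩
  -- the test set T
  let T : Set (ModuleCat.{0} (R ⧸ Ideal.span {x})) :=
    {N | Module.Finite R (RestrictScalars R (R ⧸ Ideal.span {x}) ↥N) ∧
      ∃ (V : Type) (_ : AddCommGroup V) (_ : Module R V)
        (p : V →ₗ[R] RestrictScalars R (R ⧸ Ideal.span {x}) ↥N),
        ModuleCat.of R V ∈ S ∧ Function.Surjective p ∧
        ModuleCat.of R ↥(LinearMap.ker p) ∈ S}
  -- for N ∈ T, the kernel of ANY surjection from a member of S onto N lies in S
  have tker : ∀ N : ModuleCat.{0} (R ⧸ Ideal.span {x}), N ∈ T →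
      ∀ (W : Type) (_ : AddCommGroup W) (_ : Module R W)
        (q : W →ₗ[R] RestrictScalars R (R ⧸ Ideal.span {x}) ↥N),
        ModuleCat.of R W ∈ S → Function.Surjective q →
        ModuleCat.of R ↥(LinearMap.ker q) ∈ S := by
    intro N hN W iW1 iW2 q hW hq
    obtain ⟨-, V, iV1, iV2, p, hV, hp, hkp⟩ := hN
    letI := iW1; letI := iW2; letI := iV1; letI := iV2
    exact Res13.kerTransfer S hext hker q p hq hp hW hV hkp
  -- T is closed under isomorphism
  have t_iso : ∀ A B : ModuleCat.{0} (R ⧸ Ideal.span {x}), A ∈ T →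
      Nonempty (A ≃ₗ[R ⧸ Ideal.span {x}] B) → B ∈ T := by
    rintro A B hA ⟨e⟩
    obtain ⟨hfin, V, iV1, iV2, p, hV, hp, hkp⟩ := hA
    letI := iV1; letI := iV2
    haveI := hfin
    let eR := Res13.qToRE R (R ⧸ Ideal.span {x}) e
    refine ⟨Module.Finite.equiv eR, V, inferInstance, inferInstance,
      eR.toLinearMap ∘ₗ p, hV, eR.surjective.comp hp, ?_⟩
    erw [Res13.ker_comp_inj R p eR.toLinearMap eR.injective]
    exact hkp
  -- (R/x) itself is in T
  have t_unit : ModuleCat.of (R ⧸ Ideal.span {x}) (R ⧸ Ideal.span {x}) ∈ T := by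
    let p0 : R →ₗ[R] RestrictScalars R (R ⧸ Ideal.span {x}) (R ⧸ Ideal.span {x}) :=
      { toFun := fun r => (RestrictScalars.addEquiv R _ _).symm
          (algebraMap R (R ⧸ Ideal.span {x}) r)
        map_add' := by intro a b; simp
        map_smul' := by
          intro r a
          show (RestrictScalars.addEquiv R _ _).symm
              (algebraMap R (R ⧸ Ideal.span {x}) (r • a)) =
            r • (RestrictScalars.addEquiv R _ _).symm (algebraMap R (R ⧸ Ideal.span {x}) a)
          rw [smul_eq_mul, map_mul, ← smul_eq_mul,
            RestrictScalars.addEquiv_symm_map_algebraMap_smul] }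
    have hp0 : Function.Surjective p0 := by
      intro q
      obtain ⟨r, hr⟩ := Ideal.Quotient.mk_surjective
        ((RestrictScalars.addEquiv R (R ⧸ Ideal.span {x}) (R ⧸ Ideal.span {x})) q)
      refine ⟨r, (RestrictScalars.addEquiv R (R ⧸ Ideal.span {x})
        (R ⧸ Ideal.span {x})).injective ?_⟩
      show (RestrictScalars.addEquiv R (R ⧸ Ideal.span {x}) (R ⧸ Ideal.span {x}))
        ((RestrictScalars.addEquiv R (R ⧸ Ideal.span {x}) (R ⧸ Ideal.span {x})).symm
          (algebraMap R (R ⧸ Ideal.span {x}) r)) = _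
      rw [AddEquiv.apply_symm_apply, Ideal.Quotient.algebraMap_eq]
      exact hr
    have hk0 : LinearMap.ker p0 = Ideal.span {x} := by
      ext r
      rw [LinearMap.mem_ker]
      show (RestrictScalars.addEquiv R _ _).symm (algebraMap R (R ⧸ Ideal.span {x}) r) = 0 ↔ _
      rw [Ideal.Quotient.algebraMap_eq]
      exact (EmbeddingLike.map_eq_zero_iff).trans (Ideal.Quotient.eq_zero_iff_mem)
    -- the kernel is free of rank one since x is a nonzerodivisor
    have hμinj : Function.Injective (LinearMap.toSpanSingleton R R x) := by
      intro a b hab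
      apply hxR
      show x • a = x • b
      rw [smul_eq_mul, smul_eq_mul, mul_comm x a, mul_comm x b]
      exact hab
    have hkmem : ModuleCat.of R ↥(LinearMap.ker p0) ∈ S := by
      refine hiso (ModuleCat.of R R) _ hR
        ⟨(LinearEquiv.ofInjective _ hμinj).trans (LinearEquiv.ofEq _ _ ?_)⟩
      rw [← LinearMap.span_singleton_eq_range, hk0]
    exact ⟨Module.Finite.of_surjective p0 hp0, R, inferInstance, inferInstance, p0, hR, hp0, hkmem⟩
  -- T is closed under direct summands
  have t_summand : ∀ A B C : ModuleCat.{0} (R ⧸ Ideal.span {x}), A ∈ T →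
      Nonempty (A ≃ₗ[R ⧸ Ideal.span {x}] (↥B × ↥C)) → B ∈ T := by
    rintro A B C hA ⟨e⟩
    obtain ⟨hfin, V, iV1, iV2, p, hV, hp, hkp⟩ := hA
    letI := iV1; letI := iV2
    let eR := Res13.qToRE R (R ⧸ Ideal.span {x}) e
    let πB := Res13.qToR R (R ⧸ Ideal.span {x}) (LinearMap.fst (R ⧸ Ideal.span {x}) ↥B ↥C)
    let πC := Res13.qToR R (R ⧸ Ideal.span {x}) (LinearMap.snd (R ⧸ Ideal.span {x}) ↥B ↥C)
    have hπB : Function.Surjective πB := fun b => ⟨(b, 0), rfl⟩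
    have hπC : Function.Surjective πC := fun c => ⟨(0, c), rfl⟩
    let qB := πB ∘ₗ eR.toLinearMap ∘ₗ p
    let qC := πC ∘ₗ eR.toLinearMap ∘ₗ p
    have hqB : Function.Surjective qB := hπB.comp (eR.surjective.comp hp)
    have hqC : Function.Surjective qC := hπC.comp (eR.surjective.comp hp)
    -- the big cover of A
    let E2 := (Res13.prodRS R (R ⧸ Ideal.span {x})).trans eR.symm
    let D := E2.toLinearMap ∘ₗ (qB.prodMap qC)
    have hD : Function.Surjective D := by
      intro z
      obtain ⟨u, hu⟩ := hqB ((E2.symm z).1)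
      obtain ⟨v, hv⟩ := hqC ((E2.symm z).2)
      refine ⟨(u, v), ?_⟩
      show E2 ((qB.prodMap qC) (u, v)) = z
      rw [LinearMap.prodMap_apply]
      simp only [hu, hv]
      exact E2.apply_symm_apply z
    have hkD : ModuleCat.of R ↥(LinearMap.ker D) ∈ S :=
      tker A ⟨hfin, V, iV1, iV2, p, hV, hp, hkp⟩ (V × V) inferInstance inferInstance D
        (hprod V V inferInstance inferInstance inferInstance inferInstance hV hV) hD
    have hkDeq : LinearMap.ker D = (LinearMap.ker qB).prod (LinearMap.ker qC) := by
      erw [show D = E2.toLinearMap ∘ₗ (qB.prodMap qC) from rfl,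
        Res13.ker_comp_inj R _ _ E2.injective, LinearMap.ker_prodMap]
    have hkqB : ModuleCat.of R ↥(LinearMap.ker qB) ∈ S := by
      refine hsummand (ModuleCat.of R ↥((LinearMap.ker qB).prod (LinearMap.ker qC)))
        (ModuleCat.of R ↥(LinearMap.ker qB)) (ModuleCat.of R ↥(LinearMap.ker qC))
        ?_ ⟨Res13.subProdEquiv R _ _⟩
      rw [← hkDeq]
      exact hkD
    have hfinB : Module.Finite R (RestrictScalars R (R ⧸ Ideal.span {x}) ↥B) := by
      have hs : Function.Surjective (πB ∘ₗ eR.toLinearMap) := hπB.comp eR.surjective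
      haveI := hfin
      exact Module.Finite.of_surjective (πB ∘ₗ eR.toLinearMap) hs
    exact ⟨hfinB, V, inferInstance, inferInstance, qB, hV, hqB, hkqB⟩
  -- T is closed under extensions
  have t_ext : ∀ (A B C : ModuleCat.{0} (R ⧸ Ideal.span {x}))
      (f : A →ₗ[R ⧸ Ideal.span {x}] B) (g : B →ₗ[R ⧸ Ideal.span {x}] C),
      Function.Injective f → Function.Surjective g →
      LinearMap.range f = LinearMap.ker g → A ∈ T → C ∈ T → B ∈ T := by
    intro A B C f g hfi hgs hfg hA hC
    have hfinA := hA.1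
    have hfinC := hC.1
    haveI := hfinA
    haveI := hfinC
    obtain ⟨a, pa, hpa⟩ :=
      Module.Finite.exists_fin' R (RestrictScalars R (R ⧸ Ideal.span {x}) ↥A)
    obtain ⟨c, pc, hpc⟩ :=
      Module.Finite.exists_fin' R (RestrictScalars R (R ⧸ Ideal.span {x}) ↥C)
    have hkpa : ModuleCat.of R ↥(LinearMap.ker pa) ∈ S :=
      tker A hA _ inferInstance inferInstance pa (hfree a) hpa
    have hkpc : ModuleCat.of R ↥(LinearMap.ker pc) ∈ S :=
      tker C hC _ inferInstance inferInstance pc (hfree c) hpc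
    let fR := Res13.qToR R (R ⧸ Ideal.span {x}) f
    let gR := Res13.qToR R (R ⧸ Ideal.span {x}) g
    have hfRi : Function.Injective fR := hfi
    have hgRs : Function.Surjective gR := hgs
    have hmem : ∀ b, gR b = 0 ↔ ∃ a', fR a' = b := by
      intro b
      have e1 : gR b = g ((RestrictScalars.addEquiv R (R ⧸ Ideal.span {x}) ↥B) b) := rfl
      constructor
      · intro hb
        have h2 : ((RestrictScalars.addEquiv R (R ⧸ Ideal.span {x}) ↥B) b) ∈
            LinearMap.range f := by
          rw [hfg, LinearMap.mem_ker, ← e1]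
          exact hb
        obtain ⟨a', ha'⟩ := h2
        exact ⟨a', ha'⟩
      · rintro ⟨a', rfl⟩
        rw [e1]
        have h3 : f ((RestrictScalars.addEquiv R (R ⧸ Ideal.span {x}) ↥A) a') ∈
            LinearMap.range f := ⟨_, rfl⟩
        rw [hfg, LinearMap.mem_ker] at h3
        exact h3
    -- lift the cover of C through g
    choose lift hlift using fun i : Fin c =>
      hgRs (pc (fun j => if i = j then (1 : R) else 0))
    let ℓ : (Fin c → R) →ₗ[R] RestrictScalars R (R ⧸ Ideal.span {x}) ↥B :=
      { toFun := fun v => ∑ i, v i • lift i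
        map_add' := by
          intro v w
          simp [add_smul, Finset.sum_add_distrib]
        map_smul' := by
          intro r v
          simp [mul_smul, Finset.smul_sum] }
    have hgℓ : ∀ v, gR (ℓ v) = pc v := by
      intro v
      show gR (∑ i, v i • lift i) = pc v
      rw [map_sum]
      simp_rw [map_smul, hlift]
      exact (LinearMap.pi_apply_eq_sum_univ pc v).symm
    -- the horseshoe cover of B
    let P : ((Fin a → R) × (Fin c → R)) →ₗ[R] RestrictScalars R (R ⧸ Ideal.span {x}) ↥B :=
      (fR ∘ₗ pa ∘ₗ LinearMap.fst R _ _) + (ℓ ∘ₗ LinearMap.snd R _ _)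
    have hPapp : ∀ z : (Fin a → R) × (Fin c → R), P z = fR (pa z.1) + ℓ z.2 := fun z => rfl
    have hgf : ∀ a', gR (fR a') = 0 := fun a' => (hmem _).mpr ⟨a', rfl⟩
    have hPs : Function.Surjective P := by
      intro b
      obtain ⟨v, hv⟩ := hpc (gR b)
      have : gR (b - ℓ v) = 0 := by
        rw [map_sub, hgℓ, hv, sub_self]
      obtain ⟨a', ha'⟩ := (hmem _).mp this
      obtain ⟨u, hu⟩ := hpa a'
      refine ⟨(u, v), ?_⟩
      rw [hPapp, hu, ha']
      abel
    -- the kernel of P is an extension of ker pc by ker pa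
    have hκmem : ∀ z : LinearMap.ker P, z.1.2 ∈ LinearMap.ker pc := by
      intro z
      rw [LinearMap.mem_ker]
      have h1 : gR (P z.1) = 0 := by rw [LinearMap.mem_ker.mp z.2, map_zero]
      rw [hPapp, map_add, hgf, zero_add, hgℓ] at h1
      exact h1
    let κ : LinearMap.ker P →ₗ[R] LinearMap.ker pc :=
      LinearMap.codRestrict _ ((LinearMap.snd R _ _) ∘ₗ (LinearMap.ker P).subtype) hκmem
    have hκs : Function.Surjective κ := by
      rintro ⟨v, hv⟩
      have h1 : gR (ℓ v) = 0 := by rw [hgℓ, LinearMap.mem_ker.mp hv]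
      obtain ⟨a', ha'⟩ := (hmem _).mp h1
      obtain ⟨u, hu⟩ := hpa (-a')
      have hz : ((u, v) : (Fin a → R) × (Fin c → R)) ∈ LinearMap.ker P := by
        rw [LinearMap.mem_ker, hPapp, hu, map_neg, ha']
        abel
      exact ⟨⟨(u, v), hz⟩, rfl⟩
    have hιmem : ∀ u : LinearMap.ker pa,
        (((u : Fin a → R), (0 : Fin c → R)) : (Fin a → R) × (Fin c → R)) ∈ LinearMap.ker P := by
      intro u
      rw [LinearMap.mem_ker, hPapp]
      simp [LinearMap.mem_ker.mp u.2]
    let ι : LinearMap.ker pa →ₗ[R] LinearMap.ker P :=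
      LinearMap.codRestrict _
        ((LinearMap.inl R (Fin a → R) (Fin c → R)) ∘ₗ (LinearMap.ker pa).subtype) hιmem
    have hιi : Function.Injective ι := by
      intro u w huw
      exact Subtype.ext (congrArg Prod.fst (congrArg Subtype.val huw))
    have hrange : LinearMap.range ι = LinearMap.ker κ := by
      ext z
      obtain ⟨⟨u, v⟩, huv⟩ := z
      constructor
      · rintro ⟨w, hw⟩
        have h1 : v = 0 := (congrArg Prod.snd (congrArg Subtype.val hw)).symm
        apply Subtype.ext
        show v = 0
        exact h1
      · intro hz
        have hv : v = 0 := congrArg Subtype.val hz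
        have hu : u ∈ LinearMap.ker pa := by
          rw [LinearMap.mem_ker]
          apply hfRi
          rw [map_zero]
          have := LinearMap.mem_ker.mp huv
          rw [hPapp] at this
          rw [hv] at this
          simpa using this
        refine ⟨⟨u, hu⟩, Subtype.ext ?_⟩
        show ((u, (0 : Fin c → R)) : (Fin a → R) × (Fin c → R)) = (u, v)
        rw [hv]
    have hkP : ModuleCat.of R ↥(LinearMap.ker P) ∈ S :=
      hext (ModuleCat.of R ↥(LinearMap.ker pa)) (ModuleCat.of R ↥(LinearMap.ker P))
        (ModuleCat.of R ↥(LinearMap.ker pc)) ι κ hιi hκs hrange hkpa hkpc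
    have hfinB : Module.Finite R (RestrictScalars R (R ⧸ Ideal.span {x}) ↥B) :=
      Module.Finite.of_surjective P hPs
    exact ⟨hfinB, (Fin a → R) × (Fin c → R), inferInstance, inferInstance, P,
      hprod _ _ inferInstance inferInstance inferInstance inferInstance (hfree a) (hfree c),
      hPs, hkP⟩
  -- T is closed under kernels of epimorphisms
  have t_kernel : ∀ (A B C : ModuleCat.{0} (R ⧸ Ideal.span {x}))
      (f : A →ₗ[R ⧸ Ideal.span {x}] B) (g : B →ₗ[R ⧸ Ideal.span {x}] C),
      Function.Injective f → Function.Surjective g →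
      LinearMap.range f = LinearMap.ker g → B ∈ T → C ∈ T → A ∈ T := by
    intro A B C f g hfi hgs hfg hB hC
    have hfinB := hB.1
    haveI := hfinB
    obtain ⟨b, pb, hpb⟩ :=
      Module.Finite.exists_fin' R (RestrictScalars R (R ⧸ Ideal.span {x}) ↥B)
    have hkpb : ModuleCat.of R ↥(LinearMap.ker pb) ∈ S :=
      tker B hB _ inferInstance inferInstance pb (hfree b) hpb
    let fR := Res13.qToR R (R ⧸ Ideal.span {x}) f
    let gR := Res13.qToR R (R ⧸ Ideal.span {x}) g
    have hfRi : Function.Injective fR := hfi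
    have hgRs : Function.Surjective gR := hgs
    have hmem : ∀ y, gR y = 0 ↔ ∃ a', fR a' = y := by
      intro y
      have e1 : gR y = g ((RestrictScalars.addEquiv R (R ⧸ Ideal.span {x}) ↥B) y) := rfl
      constructor
      · intro hy
        have h2 : ((RestrictScalars.addEquiv R (R ⧸ Ideal.span {x}) ↥B) y) ∈
            LinearMap.range f := by
          rw [hfg, LinearMap.mem_ker, ← e1]
          exact hy
        obtain ⟨a', ha'⟩ := h2
        exact ⟨a', ha'⟩
      · rintro ⟨a', rfl⟩
        rw [e1]
        have h3 : f ((RestrictScalars.addEquiv R (R ⧸ Ideal.span {x}) ↥A) a') ∈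
            LinearMap.range f := ⟨_, rfl⟩
        rw [hfg, LinearMap.mem_ker] at h3
        exact h3
    let q2 := gR ∘ₗ pb
    have hq2 : Function.Surjective q2 := hgRs.comp hpb
    have hkq2 : ModuleCat.of R ↥(LinearMap.ker q2) ∈ S :=
      tker C hC _ inferInstance inferInstance q2 (hfree b) hq2
    -- the surjection from ker q2 onto A
    let eA := LinearEquiv.ofInjective fR hfRi
    have hw0 : ∀ z : LinearMap.ker q2, pb z.1 ∈ LinearMap.range fR := by
      intro z
      have h1 : gR (pb z.1) = 0 := LinearMap.mem_ker.mp z.2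
      obtain ⟨a', ha'⟩ := (hmem _).mp h1
      exact ⟨a', ha'⟩
    let w : LinearMap.ker q2 →ₗ[R] RestrictScalars R (R ⧸ Ideal.span {x}) ↥A :=
      eA.symm.toLinearMap ∘ₗ
        LinearMap.codRestrict _ (pb ∘ₗ (LinearMap.ker q2).subtype) hw0
    have hwapp : ∀ z : LinearMap.ker q2, fR (w z) = pb z.1 := by
      intro z
      show fR (eA.symm ⟨pb z.1, hw0 z⟩) = pb z.1
      have := eA.apply_symm_apply ⟨pb z.1, hw0 z⟩
      calc fR (eA.symm ⟨pb z.1, hw0 z⟩)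
          = ((eA (eA.symm ⟨pb z.1, hw0 z⟩)) : RestrictScalars R (R ⧸ Ideal.span {x}) ↥B) := rfl
        _ = pb z.1 := by rw [this]
    have hws : Function.Surjective w := by
      intro a'
      obtain ⟨u, hu⟩ := hpb (fR a')
      have hz : u ∈ LinearMap.ker q2 := by
        rw [LinearMap.mem_ker]
        show gR (pb u) = 0
        rw [hu]
        exact (hmem _).mpr ⟨a', rfl⟩
      refine ⟨⟨u, hz⟩, ?_⟩
      apply hfRi
      rw [hwapp]
      exact hu.symm ▸ rfl
    -- the kernel of w is isomorphic to ker pb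
    have hkweq : ∀ z : LinearMap.ker q2, (z ∈ LinearMap.ker w ↔ pb z.1 = 0) := by
      intro z
      rw [LinearMap.mem_ker]
      constructor
      · intro hz
        rw [← hwapp z, hz, map_zero]
      · intro hz
        show eA.symm.toLinearMap
          (LinearMap.codRestrict _ (pb ∘ₗ (LinearMap.ker q2).subtype) hw0 z) = 0
        have h1 : (LinearMap.codRestrict _ (pb ∘ₗ (LinearMap.ker q2).subtype) hw0 z) =
            (0 : ↥(LinearMap.range fR)) := Subtype.ext hz
        rw [h1, map_zero]
    let kerEquiv : ↥(LinearMap.ker w) ≃ₗ[R] ↥(LinearMap.ker pb) :=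
      { toFun := fun z => ⟨z.1.1, LinearMap.mem_ker.mpr ((hkweq z.1).mp z.2)⟩
        invFun := fun u => ⟨⟨u.1, by
            rw [LinearMap.mem_ker]
            show gR (pb u.1) = 0
            rw [LinearMap.mem_ker.mp u.2, map_zero]⟩,
          by
            rw [LinearMap.mem_ker]
            have := (hkweq ⟨u.1, by
              rw [LinearMap.mem_ker]
              show gR (pb u.1) = 0
              rw [LinearMap.mem_ker.mp u.2, map_zero]⟩)
            exact this.mpr (LinearMap.mem_ker.mp u.2)⟩
        map_add' := fun _ _ => rfl
        map_smul' := fun _ _ => rfl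
        left_inv := fun z => Subtype.ext (Subtype.ext rfl)
        right_inv := fun u => Subtype.ext rfl }
    have hkw : ModuleCat.of R ↥(LinearMap.ker w) ∈ S :=
      hiso (ModuleCat.of R ↥(LinearMap.ker pb)) _ hkpb ⟨kerEquiv.symm⟩
    -- finiteness of A
    have hfinA : Module.Finite R (RestrictScalars R (R ⧸ Ideal.span {x}) ↥A) := by
      haveI := hfinB
      haveI : IsNoetherian R (RestrictScalars R (R ⧸ Ideal.span {x}) ↥B) :=
        @isNoetherian_of_isNoetherianRing_of_finite R _ _ _ _ _ hfinB
      haveI : Module.Finite R ↥(LinearMap.range fR) :=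
        Module.Finite.iff_fg.mpr (IsNoetherian.noetherian _)
      exact Module.Finite.equiv eA.symm
    exact ⟨hfinA, ↥(LinearMap.ker q2), inferInstance, inferInstance, w, hkq2, hws, hkw⟩
  -- X/xX is in T
  have t_X : ModuleCat.of (R ⧸ Ideal.span {x})
      (X ⧸ (Ideal.span {x} • (⊤ : Submodule R X))) ∈ T := by
    let π : X →ₗ[R] RestrictScalars R (R ⧸ Ideal.span {x})
        (X ⧸ (Ideal.span {x} • (⊤ : Submodule R X))) :=
      { toFun := fun m => (RestrictScalars.addEquiv R _ _).symm
          (Submodule.Quotient.mk m)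
        map_add' := by
          intro a b
          show (RestrictScalars.addEquiv R _ _).symm (Submodule.Quotient.mk (a + b)) = _
          rw [Submodule.Quotient.mk_add, map_add]
        map_smul' := by
          intro r m
          show (RestrictScalars.addEquiv R _ _).symm (Submodule.Quotient.mk (r • m)) =
            r • (RestrictScalars.addEquiv R _ _).symm (Submodule.Quotient.mk m)
          rw [← RestrictScalars.addEquiv_symm_map_algebraMap_smul]
          congr 1 }
    have hπs : Function.Surjective π := by
      intro q
      obtain ⟨m, hm⟩ := Submodule.Quotient.mk_surjective _
        ((RestrictScalars.addEquiv R (R ⧸ Ideal.span {x}) _) q)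
      exact ⟨m, by simp [π, hm]⟩
    have hkπ : LinearMap.ker π = Ideal.span {x} • (⊤ : Submodule R X) := by
      ext m
      rw [LinearMap.mem_ker]
      show (RestrictScalars.addEquiv R _ _).symm (Submodule.Quotient.mk m) = 0 ↔ _
      rw [EmbeddingLike.map_eq_zero_iff]
      exact Submodule.Quotient.mk_eq_zero _
    have hμinj : Function.Injective ((LinearMap.lsmul R X) x) := by
      intro u v huv
      exact hxX huv
    have hrμ : LinearMap.range ((LinearMap.lsmul R X) x) =
        Ideal.span {x} • (⊤ : Submodule R X) := by
      rw [Submodule.ideal_span_singleton_smul]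
      ext m
      rw [LinearMap.mem_range, ← SetLike.mem_coe, Submodule.coe_pointwise_smul,
        Set.mem_smul_set]
      constructor
      · rintro ⟨y, hy⟩
        exact ⟨y, by trivial, hy⟩
      · rintro ⟨y, -, hy⟩
        exact ⟨y, hy⟩
    have hkmem : ModuleCat.of R ↥(LinearMap.ker π) ∈ S := by
      refine hiso (ModuleCat.of R X) _ hXS
        ⟨(LinearEquiv.ofInjective _ hμinj).trans (LinearEquiv.ofEq _ _ ?_)⟩
      rw [hrμ, hkπ]
    exact ⟨Module.Finite.of_surjective π hπs, X, inferInstance, inferInstance, π, hXS, hπs, hkmem⟩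
  -- conclude
  have hMT : M ∈ T := hM T t_iso t_unit t_summand t_ext t_kernel t_X
  obtain ⟨-, V, iV1, iV2, p, hV, hp, hkp⟩ := hMT
  letI := iV1; letI := iV2
  have hkf : ModuleCat.of R ↥(LinearMap.ker fK) ∈ S :=
    Res13.kerTransfer S hext hker fK p hfK hp (hfree n) hV hkp
  exact hiso _ _ hkf ⟨eK.symm⟩
end
end

section
/- Let R be a commutative Noetherian local ring and Φ a subset of Spec R. Then the full subcategory V^{-1}(Φ) of finitely generated R-modules M whose nonfree locus is contained in Φ is a resolving subcategory: it contains R and is closed under direct summands, extensions, and kernels of epimorphisms. -/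
open CategoryTheory IsLocalRing

noncomputable section

/-- Over a Noetherian local ring, finitely generated projective modules are free. -/
lemma aux_free_of_fg_projective {S : Type} [CommRing S] [IsLocalRing S] [IsNoetherianRing S]
    (M : Type) [AddCommGroup M] [Module S M]
    [Module.Finite S M] [Module.Projective S M] : Module.Free S M := by
  have := Module.finitePresentation_of_finite S M
  exact Module.free_of_flat_of_isLocalRing

/-- A short exact sequence with free (hence projective) cokernel splits. -/
lemma aux_split {S : Type} [CommRing S] {M N P : Type}
    [AddCommGroup M] [AddCommGroup N] [AddCommGroup P]
    [Module S M] [Module S N] [Module S P] (f : M →ₗ[S] N) (g : N →ₗ[S] P)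
    (hf : Function.Injective f) (hg : Function.Surjective g) (h : Function.Exact f g)
    [Module.Free S P] : Nonempty (N ≃ₗ[S] M × P) := by
  obtain ⟨l, hl⟩ := Module.projective_lifting_property g .id hg
  exact ⟨(h.splitSurjectiveEquiv hf ⟨l, hl⟩).1⟩

/-- for any `Φ ⊆ Spec R` the subcategory `V⁻¹(Φ)` of finitely
generated modules whose nonfree locus is contained in `Φ` is resolving:
it contains `R` and is closed under direct summands, extensions and
kernels of epimorphisms. -/
theorem nonfreeLocus_preimage_resolving
    (R : Type) [CommRing R] [IsLocalRing R] [IsNoetherianRing R]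
    (Φ : Set (PrimeSpectrum R)) :
    (nonfreeLocus R R ⊆ Φ) ∧
    (∀ (A B C : ModuleCat.{0} R), Module.Finite R ↥A →
      nonfreeLocus R ↥A ⊆ Φ → Nonempty (A ≃ₗ[R] (↥B × ↥C)) →
      nonfreeLocus R ↥B ⊆ Φ) ∧
    (∀ (A B C : ModuleCat.{0} R) (f : A →ₗ[R] B) (g : B →ₗ[R] C),
      Module.Finite R ↥A → Module.Finite R ↥B → Module.Finite R ↥C →
      Function.Injective f → Function.Surjective g →
      LinearMap.range f = LinearMap.ker g →
      nonfreeLocus R ↥A ⊆ Φ → nonfreeLocus R ↥C ⊆ Φ →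
      nonfreeLocus R ↥B ⊆ Φ) ∧
    (∀ (A B C : ModuleCat.{0} R) (f : A →ₗ[R] B) (g : B →ₗ[R] C),
      Module.Finite R ↥A → Module.Finite R ↥B → Module.Finite R ↥C →
      Function.Injective f → Function.Surjective g →
      LinearMap.range f = LinearMap.ker g →
      nonfreeLocus R ↥B ⊆ Φ → nonfreeLocus R ↥C ⊆ Φ →
      nonfreeLocus R ↥A ⊆ Φ) := by
  have hLR : ∀ p : PrimeSpectrum R, IsLocalRing (Localization.AtPrime p.asIdeal) :=
    fun p => inferInstance
  have hNR : ∀ p : PrimeSpectrum R, IsNoetherianRing (Localization.AtPrime p.asIdeal) :=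
    fun p => IsLocalization.isNoetherianRing p.asIdeal.primeCompl _ inferInstance
  refine ⟨?_, ?_, ?_, ?_⟩
  · -- R itself
    intro p hp
    exact absurd (Module.free_of_isLocalizedModule p.asIdeal.primeCompl
      (LocalizedModule.mkLinearMap p.asIdeal.primeCompl R)) hp
  · -- direct summands
    intro A B C hA hAΦ ⟨e⟩ p hp
    by_contra hpΦ
    have := hNR p
    have hAfree : Module.Free (Localization.AtPrime p.asIdeal)
        (LocalizedModule p.asIdeal.primeCompl ↥A) :=
      not_not.mp (fun h => hpΦ (hAΦ h))
    set S := p.asIdeal.primeCompl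
    -- B is a retract of A
    set i : ↥B →ₗ[R] ↥A := e.symm.toLinearMap ∘ₗ LinearMap.inl R ↥B ↥C with hi
    set r : ↥A →ₗ[R] ↥B := LinearMap.fst R ↥B ↥C ∘ₗ e.toLinearMap with hr
    have hri : r ∘ₗ i = LinearMap.id := by
      ext x; simp [hi, hr]
    -- localize
    have hsplit : (LocalizedModule.map S r) ∘ₗ (LocalizedModule.map S i) = LinearMap.id := by
      ext x
      induction x using LocalizedModule.induction_on with
      | h m s =>
        simp only [LinearMap.comp_apply, LocalizedModule.map_mk, LinearMap.id_apply]
        rw [← LinearMap.comp_apply, hri, LinearMap.id_apply]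
    have hBfin : Module.Finite R ↥B :=
      Module.Finite.of_surjective r (fun b => ⟨e.symm (b, 0), by simp [hr]⟩)
    have hBfinS : Module.Finite (Localization.AtPrime p.asIdeal)
        (LocalizedModule S ↥B) :=
      Module.Finite.of_isLocalizedModule S (LocalizedModule.mkLinearMap S ↥B)
    have hAproj' : Module.Projective (Localization.AtPrime p.asIdeal)
        (LocalizedModule S ↥A) := Module.Projective.of_free
    have hBproj : Module.Projective (Localization.AtPrime p.asIdeal)
        (LocalizedModule S ↥B) :=
      Module.Projective.of_split (LocalizedModule.map S i) (LocalizedModule.map S r) hsplit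
    exact hp (aux_free_of_fg_projective (LocalizedModule S ↥B))
  · -- extensions
    intro A B C f g hA hB hC hf hg hfg hAΦ hCΦ p hp
    by_contra hpΦ
    have := hNR p
    have hAfree : Module.Free (Localization.AtPrime p.asIdeal)
        (LocalizedModule p.asIdeal.primeCompl ↥A) :=
      not_not.mp (fun h => hpΦ (hAΦ h))
    have hCfree : Module.Free (Localization.AtPrime p.asIdeal)
        (LocalizedModule p.asIdeal.primeCompl ↥C) :=
      not_not.mp (fun h => hpΦ (hCΦ h))
    set S := p.asIdeal.primeCompl
    have hex : Function.Exact f g := LinearMap.exact_iff.mpr hfg.symm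
    have hex' : Function.Exact (LocalizedModule.map S f) (LocalizedModule.map S g) :=
      LocalizedModule.map_exact S f g hex
    obtain ⟨e⟩ := aux_split (LocalizedModule.map S f) (LocalizedModule.map S g)
      (LocalizedModule.map_injective S f hf) (LocalizedModule.map_surjective S g hg) hex'
    exact hp (Module.Free.of_equiv e.symm)
  · -- kernels of epimorphisms
    intro A B C f g hA hB hC hf hg hfg hBΦ hCΦ p hp
    by_contra hpΦ
    have := hNR p
    have hBfree : Module.Free (Localization.AtPrime p.asIdeal)
        (LocalizedModule p.asIdeal.primeCompl ↥B) :=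
      not_not.mp (fun h => hpΦ (hBΦ h))
    have hCfree : Module.Free (Localization.AtPrime p.asIdeal)
        (LocalizedModule p.asIdeal.primeCompl ↥C) :=
      not_not.mp (fun h => hpΦ (hCΦ h))
    set S := p.asIdeal.primeCompl
    have hex : Function.Exact f g := LinearMap.exact_iff.mpr hfg.symm
    have hex' : Function.Exact (LocalizedModule.map S f) (LocalizedModule.map S g) :=
      LocalizedModule.map_exact S f g hex
    obtain ⟨e⟩ := aux_split (LocalizedModule.map S f) (LocalizedModule.map S g)
      (LocalizedModule.map_injective S f hf) (LocalizedModule.map_surjective S g hg) hex'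
    -- A_p is a direct summand of B_p via e
    have hAfinS : Module.Finite (Localization.AtPrime p.asIdeal)
        (LocalizedModule S ↥A) :=
      Module.Finite.of_isLocalizedModule S (LocalizedModule.mkLinearMap S ↥A)
    have hBproj' : Module.Projective (Localization.AtPrime p.asIdeal)
        (LocalizedModule S ↥B) := Module.Projective.of_free
    have hAproj : Module.Projective (Localization.AtPrime p.asIdeal)
        (LocalizedModule S ↥A) :=
      Module.Projective.of_split
        (e.symm.toLinearMap ∘ₗ LinearMap.inl _ _ _)
        (LinearMap.fst _ _ _ ∘ₗ e.toLinearMap)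
        (by ext x; simp)
    exact hp (aux_free_of_fg_projective (LocalizedModule S ↥A))
end
end

section
/- Let R be a Cohen-Macaulay commutative Noetherian local ring. Let X be a full subcategory of maximal Cohen-Macaulay R-modules (closed under isomorphism and direct summands) that contains R and is thick: for every short exact sequence 0 → L → M → N → 0 of maximal Cohen-Macaulay R-modules, if two of L, M, N are in X then so is the third. Then X is a resolving subcategory of finitely generated R-modules: it is closed under extensions and kernels of epimorphisms within all finitely generated modules. -/
open CategoryTheory IsLocalRing

noncomputable section

variable (R : Type) [CommRing R] [IsLocalRing R]

/-- The depth of a module over a Noetherian local ring: the supremum of the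
lengths of (weakly) regular sequences on `M` contained in the maximal ideal.
With this definition `depth 0 = ∞`. -/
noncomputable def mdepth (M : Type) [AddCommGroup M] [Module R M] : ℕ∞ :=
  ⨆ (rs : List R) (_ : (∀ r ∈ rs, r ∈ maximalIdeal R) ∧
    RingTheory.Sequence.IsWeaklyRegular M rs), (rs.length : ℕ∞)

/-- A finitely generated module is maximal Cohen-Macaulay if its depth is at
least the Krull dimension of the ring. -/
def IsMCM (M : Type) [AddCommGroup M] [Module R M] : Prop :=
  Module.Finite R M ∧ ringKrullDim R ≤ (mdepth R M : WithBot ℕ∞)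


section Auxiliary

open Submodule RingTheory.Sequence Pointwise

def HasSeq (M : Type) [AddCommGroup M] [Module R M] (n : ℕ) : Prop :=
  ∃ rs : List R, rs.length = n ∧ (∀ r ∈ rs, r ∈ maximalIdeal R) ∧
    RingTheory.Sequence.IsWeaklyRegular M rs

variable {R}

theorem assoc_sub_union [IsNoetherianRing R] {L : Type} [AddCommGroup L] [Module R L] (K : Submodule R L) :
    associatedPrimes R L ⊆ associatedPrimes R K ∪ associatedPrimes R (L ⧸ K) := by
  intro p hmem
  obtain ⟨hp, u, hu⟩ := isAssociatedPrime_iff.mp hmem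
  have hu' : ∀ t : R, t ∈ p ↔ t • u = 0 := by
    intro t
    rw [hu, Submodule.mem_colon_singleton, Submodule.mem_bot]
  by_cases hcase : ∃ r : R, r • u ∈ K ∧ r • u ≠ 0
  · obtain ⟨r, hrK, hr0⟩ := hcase
    left
    refine isAssociatedPrime_iff.mpr ⟨hp, ⟨r • u, hrK⟩, ?_⟩
    ext t
    rw [Submodule.mem_colon_singleton, Submodule.mem_bot, hu' t]
    constructor
    · intro ht
      ext
      show t • (r • u) = 0
      rw [smul_comm, ht, smul_zero]
    · intro ht
      have : (t * r) • u = 0 := by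
        have := congrArg (Subtype.val) ht
        simpa [mul_smul, smul_comm t r u] using this
      rcases hp.mem_or_mem ((hu' (t*r)).mpr this) with h | h
      · exact (hu' t).mp h
      · exact absurd ((hu' r).mp h) hr0
  · push_neg at hcase
    right
    refine isAssociatedPrime_iff.mpr ⟨hp, K.mkQ u, ?_⟩
    ext t
    rw [Submodule.mem_colon_singleton, Submodule.mem_bot, hu' t, ← map_smul,
      Submodule.mkQ_apply, Submodule.Quotient.mk_eq_zero]
    exact ⟨fun h => by rw [h]; exact K.zero_mem, fun h => hcase t h⟩

theorem assoc_quot_prime [IsNoetherianRing R] (p : Ideal R) (hp : p.IsPrime) :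
    associatedPrimes R (R ⧸ p) ⊆ {p} := by
  intro q hmem
  obtain ⟨hq, x, hx⟩ := isAssociatedPrime_iff.mp hmem
  obtain ⟨a, rfl⟩ := Ideal.Quotient.mk_surjective x
  have hxa : ∀ t : R, t ∈ q ↔ t * a ∈ p := by
    intro t
    rw [hx, Submodule.mem_colon_singleton, Submodule.mem_bot]
    show t • (Ideal.Quotient.mk p a) = 0 ↔ _
    rw [show t • (Ideal.Quotient.mk p a) = Ideal.Quotient.mk p (t * a) from rfl,
      Ideal.Quotient.eq_zero_iff_mem]
  have ha : a ∉ p := by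
    intro h
    exact hq.ne_top (Ideal.eq_top_iff_one _ |>.mpr ((hxa 1).mpr (by simpa using h)))
  have : q = p := by
    ext t
    rw [hxa t]
    exact ⟨fun h => (hp.mem_or_mem h).resolve_right ha, fun h => Ideal.mul_mem_right a p h⟩
  simp [this]

theorem assoc_finite [IsNoetherianRing R] (L : Type) [AddCommGroup L] [Module R L]
    [Module.Finite R L] : (associatedPrimes R L).Finite := by
  have main : ∀ K : Submodule R L, (associatedPrimes R (L ⧸ K)).Finite := by
    intro K
    induction K using IsNoetherian.induction with
    | _ K IH =>
      by_cases hK : associatedPrimes R (L ⧸ K) = ∅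
      · rw [hK]; exact Set.finite_empty
      · obtain ⟨p, hp'⟩ := Set.nonempty_iff_ne_empty.mpr hK
        obtain ⟨hp, ubar, hub⟩ := isAssociatedPrime_iff.mp hp'
        obtain ⟨u, rfl⟩ := K.mkQ_surjective ubar
        have hune : K.mkQ u ≠ 0 := by
          intro h
          rw [h] at hub
          rw [Submodule.colon_singleton_zero] at hub
          exact hp.ne_top hub
        have huK : u ∉ K := fun h => hune ((Submodule.Quotient.mk_eq_zero K).mpr h)
        set J : Submodule R L := K ⊔ R ∙ u with hJ
        have hKJ : K < J := by
          rw [hJ, lt_iff_le_and_ne]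
          refine ⟨le_sup_left, fun h => huK ?_⟩
          rw [h]
          exact Submodule.mem_sup_right (Submodule.mem_span_singleton_self u)
        have h0 : K.map K.mkQ = ⊥ := by
          rw [eq_bot_iff]
          rintro x ⟨a, ha, rfl⟩
          simpa [Submodule.Quotient.mk_eq_zero] using ha
        have hmap : J.map K.mkQ = R ∙ K.mkQ u := by
          rw [hJ, Submodule.map_sup, h0, Submodule.map_span, bot_sup_eq, Set.image_singleton]
        -- span of ubar is iso to R ⧸ p
        have hspan : (associatedPrimes R ↥(R ∙ K.mkQ u)).Finite := by
          have e := (Ideal.quotTorsionOfEquivSpanSingleton R (L ⧸ K) (K.mkQ u))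
          have := (LinearEquiv.AssociatedPrimes.eq e).symm
          rw [this]
          have hpeq : Ideal.torsionOf R (L ⧸ K) (K.mkQ u) = p := by
            ext t
            rw [Ideal.mem_torsionOf_iff, hub, Submodule.mem_colon_singleton, Submodule.mem_bot]
          refine Set.Finite.subset (Set.finite_singleton p) ?_
          rw [hpeq] at *
          exact assoc_quot_prime p hp
        have hquot : (associatedPrimes R ((L ⧸ K) ⧸ (R ∙ K.mkQ u))).Finite := by
          rw [← hmap]
          have e := Submodule.quotientQuotientEquivQuotient K J (le_of_lt hKJ)
          rw [LinearEquiv.AssociatedPrimes.eq e]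
          exact IH J hKJ
        exact Set.Finite.subset (hspan.union hquot) (assoc_sub_union _)
  have e := Submodule.quotEquivOfEqBot (⊥ : Submodule R L) rfl
  rw [← LinearEquiv.AssociatedPrimes.eq e]
  exact main ⊥

theorem not_mem_assoc_of_regular [IsLocalRing R] [IsNoetherianRing R] {N : Type} [AddCommGroup N] [Module R N]
    {y : R} (hy : y ∈ maximalIdeal R) (hreg : IsSMulRegular N y) :
    maximalIdeal R ∉ associatedPrimes R N := by
  intro hmem
  obtain ⟨hp, x, hx⟩ := isAssociatedPrime_iff.mp hmem
  have hx0 : x ≠ 0 := by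
    rintro rfl
    rw [Submodule.colon_singleton_zero] at hx
    exact hp.ne_top hx
  have : y • x = 0 := by
    have := hx ▸ hy
    rwa [Submodule.mem_colon_singleton, Submodule.mem_bot] at this
  exact hx0 (hreg.right_eq_zero_of_smul this)

theorem exists_common_regular [IsNoetherianRing R] [IsLocalRing R]
    (N₁ N₂ : Type) [AddCommGroup N₁] [Module R N₁] [AddCommGroup N₂] [Module R N₂]
    [Module.Finite R N₁] [Module.Finite R N₂]
    (h₁ : maximalIdeal R ∉ associatedPrimes R N₁)
    (h₂ : maximalIdeal R ∉ associatedPrimes R N₂) :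
    ∃ y ∈ maximalIdeal R, IsSMulRegular N₁ y ∧ IsSMulRegular N₂ y := by
  classical
  have hfin : (associatedPrimes R N₁ ∪ associatedPrimes R N₂).Finite :=
    (assoc_finite N₁).union (assoc_finite N₂)
  set s : Finset (Ideal R) := hfin.toFinset with hs
  by_contra hcon
  push_neg at hcon
  have hsub : (maximalIdeal R : Set R) ⊆ ⋃ p ∈ (s : Set (Ideal R)), (id p : Ideal R) := by
    intro y hy
    rcases Classical.em (IsSMulRegular N₁ y) with h1 | h1
    · have h2 := hcon y hy h1
      -- y is a zero divisor on N₂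
      have : y ∈ ⋃ p ∈ associatedPrimes R N₂, (p : Set R) := by
        rw [biUnion_associatedPrimes_eq_compl_regular R N₂]
        exact h2
      obtain ⟨p, hp, hyp⟩ := by simpa using this
      simp only [Set.mem_iUnion, hs]
      exact ⟨p, by simp [Set.Finite.mem_toFinset, hp], hyp⟩
    · have : y ∈ ⋃ p ∈ associatedPrimes R N₁, (p : Set R) := by
        rw [biUnion_associatedPrimes_eq_compl_regular R N₁]
        exact h1
      obtain ⟨p, hp, hyp⟩ := by simpa using this
      simp only [Set.mem_iUnion, hs]
      exact ⟨p, by simp [Set.Finite.mem_toFinset, hp], hyp⟩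
  have hprime : ∀ p ∈ s, p ≠ ⊥ → p ≠ ⊥ → Ideal.IsPrime (id p) := by
    intro p hp _ _
    rw [hs, Set.Finite.mem_toFinset] at hp
    rcases hp with h | h
    · exact h.1
    · exact h.1
  rw [Ideal.subset_union_prime ⊥ ⊥ hprime] at hsub
  obtain ⟨p, hp, hle⟩ := hsub
  rw [hs, Set.Finite.mem_toFinset] at hp
  have hple : (id p : Ideal R) ≤ maximalIdeal R :=
    le_maximalIdeal (Ideal.IsPrime.ne_top (by rcases hp with h | h; exacts [h.1, h.1]))
  have : p = maximalIdeal R := le_antisymm hple hle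
  rw [this] at hp
  rcases hp with h | h
  exacts [h₁ h, h₂ h]

theorem not_mem_assoc_quot_of_two [IsLocalRing R] [IsNoetherianRing R] {M : Type} [AddCommGroup M] [Module R M]
    {x r₁ r₂ : R} (hr₁ : r₁ ∈ maximalIdeal R) (hr₂ : r₂ ∈ maximalIdeal R)
    (hx : IsSMulRegular M x) (hreg : IsWeaklyRegular M [r₁, r₂]) :
    maximalIdeal R ∉ associatedPrimes R (QuotSMulTop x M) := by
  rw [isWeaklyRegular_cons_iff, isWeaklyRegular_singleton_iff] at hreg
  obtain ⟨hreg₁, hreg₂⟩ := hreg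
  intro hmem
  obtain ⟨hp, ubar, hub⟩ := isAssociatedPrime_iff.mp hmem
  obtain ⟨u, rfl⟩ := (x • (⊤ : Submodule R M)).mkQ_surjective ubar
  have memx : ∀ (c : R) (m : M), m ∈ c • (⊤ : Submodule R M) ↔ ∃ w : M, c • w = m := by
    intro c m
    rw [← SetLike.mem_coe, Submodule.coe_pointwise_smul, Set.mem_smul_set]
    exact ⟨fun ⟨w, _, h⟩ => ⟨w, h⟩, fun ⟨w, h⟩ => ⟨w, trivial, h⟩⟩
  have hu0 : ∀ t : R, t ∈ maximalIdeal R → ∃ w : M, x • w = t • u := by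
    intro t ht
    have := hub ▸ ht
    rw [Submodule.mem_colon_singleton, Submodule.mem_bot] at this
    rw [← map_smul, Submodule.mkQ_apply, Submodule.Quotient.mk_eq_zero] at this
    exact (memx x _).mp this
  have huK : u ∉ x • (⊤ : Submodule R M) := by
    intro h
    have h0 : (x • (⊤ : Submodule R M)).mkQ u = 0 := by
      rw [Submodule.mkQ_apply, Submodule.Quotient.mk_eq_zero]; exact h
    rw [h0, Submodule.colon_singleton_zero] at hub
    exact hp.ne_top hub
  obtain ⟨v, hv⟩ := hu0 r₁ hr₁
  -- claim : r₂ • v ∈ r₁ • ⊤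
  have hclaim : r₂ • v ∈ r₁ • (⊤ : Submodule R M) := by
    obtain ⟨w, hw⟩ := hu0 r₂ hr₂
    have : x • (r₂ • v) = x • (r₁ • w) := by
      calc x • r₂ • v = r₂ • (x • v) := smul_comm _ _ _
        _ = r₂ • (r₁ • u) := by rw [hv]
        _ = r₁ • (r₂ • u) := smul_comm _ _ _
        _ = r₁ • (x • w) := by rw [hw]
        _ = x • (r₁ • w) := smul_comm _ _ _
    rw [hx this]
    exact Submodule.smul_mem_pointwise_smul w r₁ ⊤ trivial
  have hvne : v ∉ r₁ • (⊤ : Submodule R M) := by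
    intro h
    obtain ⟨v', hv'⟩ := (memx r₁ v).mp h
    have : r₁ • (x • v') = r₁ • u := by
      rw [smul_comm, hv', hv]
    exact huK ((memx x u).mpr ⟨v', hreg₁ this⟩)
  -- contradiction with hreg₂
  have h1 : (r₁ • (⊤ : Submodule R M)).mkQ v ≠ 0 := by
    rwa [Ne, Submodule.mkQ_apply, Submodule.Quotient.mk_eq_zero]
  have h2 : r₂ • (r₁ • (⊤ : Submodule R M)).mkQ v = 0 := by
    rw [← map_smul, Submodule.mkQ_apply, Submodule.Quotient.mk_eq_zero]
    exact hclaim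
  exact h1 (hreg₂.right_eq_zero_of_smul h2)

lemma hasSeq_zero {M : Type} [AddCommGroup M] [Module R M] : HasSeq R M 0 := ⟨[], rfl, by simp, IsWeaklyRegular.nil R M⟩

lemma HasSeq.congr {M N : Type} [AddCommGroup M] [Module R M] [AddCommGroup N] [Module R N] (e : M ≃ₗ[R] N) {n : ℕ} (h : HasSeq R M n) : HasSeq R N n := by
  obtain ⟨rs, h1, h2, h3⟩ := h
  exact ⟨rs, h1, h2, (e.isWeaklyRegular_congr rs).mp h3⟩

lemma HasSeq.cons {M : Type} [AddCommGroup M] [Module R M] {x : R} (hx : x ∈ maximalIdeal R) (hreg : IsSMulRegular M x)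
    {n : ℕ} (h : HasSeq R (QuotSMulTop x M) n) : HasSeq R M (n + 1) := by
  obtain ⟨rs, h1, h2, h3⟩ := h
  exact ⟨x :: rs, by simp [h1], by
    intro r hr
    rcases List.mem_cons.mp hr with rfl | hr
    exacts [hx, h2 r hr], IsWeaklyRegular.cons hreg h3⟩

lemma HasSeq.destruct {M : Type} [AddCommGroup M] [Module R M] {n : ℕ} (h : HasSeq R M (n + 1)) :
    ∃ x ∈ maximalIdeal R, IsSMulRegular M x ∧ HasSeq R (QuotSMulTop x M) n := by
  obtain ⟨rs, h1, h2, h3⟩ := h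
  cases rs with
  | nil => simp at h1
  | cons x rs =>
    rw [isWeaklyRegular_cons_iff] at h3
    exact ⟨x, h2 x (List.mem_cons_self (a := x) (l := rs)), h3.1,
      ⟨rs, by simpa using h1, fun r hr => h2 r (List.mem_cons_of_mem x hr), h3.2⟩⟩

lemma HasSeq.mono {M : Type} [AddCommGroup M] [Module R M] {n m : ℕ} (hmn : m ≤ n) (h : HasSeq R M n) : HasSeq R M m := by
  obtain ⟨rs, h1, h2, h3⟩ := h
  refine ⟨rs.take m, by simp [h1, hmn], fun r hr => h2 r (List.mem_of_mem_take hr), ?_⟩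
  have := (isWeaklyRegular_append_iff M (rs.take m) (rs.drop m)).mp (by simpa using h3)
  exact this.1

lemma HasSeq.head {M : Type} [AddCommGroup M] [Module R M] {n : ℕ} (h : HasSeq R M (n + 1)) :
    ∃ x ∈ maximalIdeal R, IsSMulRegular M x := by
  obtain ⟨x, h1, h2, -⟩ := h.destruct
  exact ⟨x, h1, h2⟩

noncomputable def quotSMulTopComm (M : Type) [AddCommGroup M] [Module R M] (x y : R) :
    QuotSMulTop x (QuotSMulTop y M) ≃ₗ[R] QuotSMulTop y (QuotSMulTop x M) := by
  have e : ∀ a b : R, QuotSMulTop a (QuotSMulTop b M) ≃ₗ[R]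
      M ⧸ (b • (⊤ : Submodule R M) ⊔ a • (⊤ : Submodule R M)) := by
    intro a b
    refine (Submodule.quotEquivOfEq _ _ ?_).trans
      (Submodule.quotientQuotientEquivQuotientSup (b • (⊤ : Submodule R M))
        (a • (⊤ : Submodule R M)))
    rw [Submodule.map_pointwise_smul, Submodule.map_top, Submodule.range_mkQ]
  exact (e x y).trans ((Submodule.quotEquivOfEq _ _ (sup_comm _ _)).trans (e y x).symm)

lemma HasSeq.two_not_assoc [IsNoetherianRing R] {M : Type} [AddCommGroup M] [Module R M]
    {n : ℕ} (h : HasSeq R M (n + 2)) {x : R} (hx : IsSMulRegular M x) :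
    maximalIdeal R ∉ associatedPrimes R (QuotSMulTop x M) := by
  obtain ⟨r₁, hr₁, hreg₁, h'⟩ := h.destruct
  obtain ⟨r₂, hr₂, hreg₂, -⟩ := h'.destruct
  exact not_mem_assoc_quot_of_two hr₁ hr₂ hx
    ((isWeaklyRegular_cons_iff M r₁ [r₂]).mpr ⟨hreg₁,
      (isWeaklyRegular_singleton_iff _ _).mpr hreg₂⟩)

theorem exchange [IsNoetherianRing R] :
    ∀ (k : ℕ) (M : Type) [AddCommGroup M] [Module R M] [Module.Finite R M] (x : R),
      x ∈ maximalIdeal R → IsSMulRegular M x → HasSeq R M (k + 1) →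
      HasSeq R (QuotSMulTop x M) k := by
  intro k
  induction k with
  | zero => intro M _ _ _ x _ _ _; exact hasSeq_zero
  | succ k IH =>
    intro M _ _ _ x hx hxreg h
    -- the maximal ideal is not associated to M ⧸ xM
    have hNA1 : maximalIdeal R ∉ associatedPrimes R (QuotSMulTop x M) :=
      h.two_not_assoc hxreg
    -- split the sequence
    obtain ⟨rs, hlen, hmem, hwr⟩ := h
    have hne : rs ≠ [] := by rintro rfl; simp at hlen
    have hsplit : rs = rs.dropLast ++ [rs.getLast hne] := (List.dropLast_append_getLast hne).symm
    rw [hsplit] at hwr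
    rw [isWeaklyRegular_append_iff] at hwr
    obtain ⟨hwr1, hwr2⟩ := hwr
    rw [isWeaklyRegular_singleton_iff] at hwr2
    have hlast_mem : rs.getLast hne ∈ maximalIdeal R :=
      hmem _ (List.getLast_mem hne)
    have hNA2 : maximalIdeal R ∉
        associatedPrimes R (M ⧸ (Ideal.ofList rs.dropLast • ⊤ : Submodule R M)) :=
      not_mem_assoc_of_regular hlast_mem hwr2
    obtain ⟨y, hy, hyreg1, hyreg2⟩ := exists_common_regular _ _ hNA1 hNA2
    -- rs.dropLast ++ [y] is weakly regular on M
    have hwr' : IsWeaklyRegular M (rs.dropLast ++ [y]) := by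
      rw [isWeaklyRegular_append_iff]
      exact ⟨hwr1, (isWeaklyRegular_singleton_iff _ _).mpr hyreg2⟩
    have hmem' : ∀ r ∈ rs.dropLast ++ [y], r ∈ maximalIdeal R := by
      intro r hr
      rcases List.mem_append.mp hr with hr | hr
      · exact hmem r (hsplit ▸ List.mem_append.mpr (Or.inl hr))
      · rw [List.mem_singleton] at hr; subst hr; exact hy
    have hperm : (rs.dropLast ++ [y]).Perm (y :: rs.dropLast) := List.perm_append_singleton y _
    have hwr'' : IsWeaklyRegular M (y :: rs.dropLast) :=
      IsLocalRing.isWeaklyRegular_of_perm_of_subset_maximalIdeal hwr' hperm hmem'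
    rw [isWeaklyRegular_cons_iff] at hwr''
    obtain ⟨hyregM, hwrQ⟩ := hwr''
    have hlen' : rs.dropLast.length = k + 1 := by
      rw [List.length_dropLast, hlen]; rfl
    have hseqQy : HasSeq R (QuotSMulTop y M) (k + 1) :=
      ⟨rs.dropLast, hlen', fun r hr => hmem' r (List.mem_append.mpr (Or.inl hr)), hwrQ⟩
    -- x is regular on QuotSMulTop y M
    have hxy : IsWeaklyRegular M [x, y] :=
      (isWeaklyRegular_cons_iff M x [y]).mpr ⟨hxreg,
        (isWeaklyRegular_singleton_iff _ _).mpr hyreg1⟩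
    have hyx : IsWeaklyRegular M [y, x] :=
      IsLocalRing.isWeaklyRegular_of_perm_of_subset_maximalIdeal hxy (List.Perm.swap _ _ _)
        (by intro r hr; rcases List.mem_cons.mp hr with rfl | hr
            · exact hx
            · rw [List.mem_singleton] at hr; subst hr; exact hy)
    rw [isWeaklyRegular_cons_iff, isWeaklyRegular_singleton_iff] at hyx
    have hxQy : IsSMulRegular (QuotSMulTop y M) x := hyx.2
    -- apply IH to QuotSMulTop y M
    have hIH : HasSeq R (QuotSMulTop x (QuotSMulTop y M)) k := IH _ x hx hxQy hseqQy
    exact HasSeq.cons hy hyreg1 (hIH.congr (quotSMulTopComm M x y))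

lemma HasSeq.not_assoc [IsNoetherianRing R] {M : Type} [AddCommGroup M] [Module R M] {n : ℕ}
    (h : HasSeq R M (n + 1)) : maximalIdeal R ∉ associatedPrimes R M := by
  obtain ⟨x, hx, hreg⟩ := h.head
  exact not_mem_assoc_of_regular hx hreg

lemma quot_map_injective {A B C : Type} [AddCommGroup A] [Module R A] [AddCommGroup B]
    [Module R B] [AddCommGroup C] [Module R C] {f : A →ₗ[R] B} {g : B →ₗ[R] C} (y : R)
    (hf : Function.Injective f) (hfg : Function.Exact f g) (hy : IsSMulRegular C y) :
    Function.Injective (QuotSMulTop.map y f) := by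
  have h0 : Function.Exact (0 : PUnit.{1} →ₗ[R] A) f := by
    rw [LinearMap.exact_iff, LinearMap.range_zero, LinearMap.ker_eq_bot]
    exact hf
  have := QuotSMulTop.map_first_exact_on_four_term_exact_of_isSMulRegular_last h0 hfg hy
  rw [map_zero] at this
  rw [← LinearMap.ker_eq_bot, this.linearMap_ker_eq, LinearMap.range_zero]

theorem hasSeq_middle [IsNoetherianRing R] : ∀ (n : ℕ) (A B C : Type) [AddCommGroup A] [Module R A] [AddCommGroup B]
    [Module R B] [AddCommGroup C] [Module R C] [Module.Finite R A] [Module.Finite R B]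
    [Module.Finite R C] (f : A →ₗ[R] B) (g : B →ₗ[R] C), Function.Injective f →
    Function.Surjective g → Function.Exact f g →
    HasSeq R A n → HasSeq R C n → HasSeq R B n := by
  intro n
  induction n with
  | zero => intro _ _ _ _ _ _ _ _ _ _ _ _ _ _ _ _ _ _ _; exact hasSeq_zero
  | succ n IH =>
    intro A B C _ _ _ _ _ _ _ _ _ f g hf hg hfg hA hC
    obtain ⟨y, hy, hyA, hyC⟩ := exists_common_regular A C hA.not_assoc hC.not_assoc
    have hyB : IsSMulRegular B y :=
      isSMulRegular_of_range_eq_ker hf hfg.linearMap_ker_eq.symm hyA hyC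
    have hfq : Function.Injective (QuotSMulTop.map y f) := quot_map_injective y hf hfg hyC
    have hgq : Function.Surjective (QuotSMulTop.map y g) := QuotSMulTop.map_surjective y hg
    have hfgq : Function.Exact (QuotSMulTop.map y f) (QuotSMulTop.map y g) :=
      QuotSMulTop.map_exact y hfg hg
    have hA' := exchange n A y hy hyA hA
    have hC' := exchange n C y hy hyC hC
    exact HasSeq.cons hy hyB (IH _ _ _ _ _ hfq hgq hfgq hA' hC')

theorem hasSeq_kernel [IsNoetherianRing R] : ∀ (n : ℕ) (A B C : Type) [AddCommGroup A] [Module R A] [AddCommGroup B]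
    [Module R B] [AddCommGroup C] [Module R C] [Module.Finite R A] [Module.Finite R B]
    [Module.Finite R C] (f : A →ₗ[R] B) (g : B →ₗ[R] C), Function.Injective f →
    Function.Surjective g → Function.Exact f g →
    HasSeq R B n → HasSeq R C (n - 1) → HasSeq R A n := by
  intro n
  induction n with
  | zero => intro _ _ _ _ _ _ _ _ _ _ _ _ _ _ _ _ _ _ _; exact hasSeq_zero
  | succ n IH =>
    intro A B C _ _ _ _ _ _ _ _ _ f g hf hg hfg hB hC
    -- regular element on A from regular element on B
    have regA : ∀ z : R, IsSMulRegular B z → IsSMulRegular A z := by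
      intro z hz a a' haa'
      have haa'' : z • a = z • a' := haa'
      apply hf
      apply hz
      show z • f a = z • f a'
      rw [← map_smul, ← map_smul, haa'']
    cases n with
    | zero =>
      obtain ⟨x, hx, hxB⟩ := hB.head
      exact HasSeq.cons hx (regA x hxB) hasSeq_zero
    | succ n =>
      simp only [Nat.add_sub_cancel] at hC
      obtain ⟨y, hy, hyB, hyC⟩ := exists_common_regular B C hB.not_assoc hC.not_assoc
      have hyA : IsSMulRegular A y := regA y hyB
      have hfq : Function.Injective (QuotSMulTop.map y f) := quot_map_injective y hf hfg hyC
      have hgq : Function.Surjective (QuotSMulTop.map y g) := QuotSMulTop.map_surjective y hg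
      have hfgq : Function.Exact (QuotSMulTop.map y f) (QuotSMulTop.map y g) :=
        QuotSMulTop.map_exact y hfg hg
      have hB' := exchange (n + 1) B y hy hyB hB
      have hC' := exchange n C y hy hyC hC
      have : HasSeq R (QuotSMulTop y A) (n + 1) :=
        IH _ _ _ _ _ hfq hgq hfgq hB' (by simpa using hC')
      exact HasSeq.cons hy hyA this

lemma hasSeq_le_mdepth {M : Type} [AddCommGroup M] [Module R M] {n : ℕ} (h : HasSeq R M n) : (n : ℕ∞) ≤ mdepth R M := by
  obtain ⟨rs, h1, h2, h3⟩ := h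
  rw [mdepth]
  refine le_iSup_of_le rs (le_iSup_of_le ⟨h2, h3⟩ ?_)
  rw [h1]

lemma hasSeq_of_le_mdepth {M : Type} [AddCommGroup M] [Module R M] {n : ℕ} (h : (n : ℕ∞) ≤ mdepth R M) : HasSeq R M n := by
  cases n with
  | zero => exact hasSeq_zero
  | succ k =>
    have hlt : ((k : ℕ∞)) < mdepth R M :=
      lt_of_lt_of_le (by exact_mod_cast Nat.lt_succ_self k) h
    rw [mdepth, lt_iSup_iff] at hlt
    obtain ⟨rs, hrs⟩ := hlt
    rw [lt_iSup_iff] at hrs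
    obtain ⟨⟨h2, h3⟩, hlen⟩ := hrs
    have hlen' : k + 1 ≤ rs.length := by exact_mod_cast hlen
    refine ⟨rs.take (k+1), by simp [hlen'], fun r hr => h2 r (List.mem_of_mem_take hr), ?_⟩
    exact ((isWeaklyRegular_append_iff M (rs.take (k+1)) (rs.drop (k+1))).mp
      (by simpa using h3)).1

lemma enat_le_of_forall {a b : ℕ∞} (h : ∀ n : ℕ, (n : ℕ∞) ≤ a → (n : ℕ∞) ≤ b) : a ≤ b := by
  induction a using ENat.recTopCoe with
  | top =>
    induction b using ENat.recTopCoe with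
    | top => exact le_rfl
    | coe m =>
      have := h (m + 1) le_top
      exact_mod_cast absurd (by exact_mod_cast this) (Nat.not_succ_le_self m)
  | coe n => exact h n le_rfl

end Auxiliary

/-- over a Cohen-Macaulay local ring, a thick subcategory of
maximal Cohen-Macaulay modules containing `R` is resolving: it is closed
under extensions and kernels of epimorphisms among all finitely generated
modules. -/
theorem thick_subcategory_of_CM_is_resolving
    [IsNoetherianRing R]
    (hCM : ringKrullDim R ≤ (mdepth R R : WithBot ℕ∞))
    (X : Set (ModuleCat.{0} R))
    (hmem : ∀ A ∈ X, IsMCM R ↥A)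
    (hR : ModuleCat.of R R ∈ X)
    (hiso : ∀ A B : ModuleCat.{0} R, A ∈ X → Nonempty (A ≃ₗ[R] B) → B ∈ X)
    (hsummand : ∀ A B C : ModuleCat.{0} R, A ∈ X →
      Nonempty (A ≃ₗ[R] (↥B × ↥C)) → B ∈ X)
    (hthick : ∀ (A B C : ModuleCat.{0} R) (f : A →ₗ[R] B) (g : B →ₗ[R] C),
      IsMCM R ↥A → IsMCM R ↥B → IsMCM R ↥C →
      Function.Injective f → Function.Surjective g →
      LinearMap.range f = LinearMap.ker g →
      ((A ∈ X ∧ B ∈ X → C ∈ X) ∧ (A ∈ X ∧ C ∈ X → B ∈ X) ∧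
        (B ∈ X ∧ C ∈ X → A ∈ X))) :
    (∀ (A B C : ModuleCat.{0} R) (f : A →ₗ[R] B) (g : B →ₗ[R] C),
      Module.Finite R ↥A → Module.Finite R ↥B → Module.Finite R ↥C →
      Function.Injective f → Function.Surjective g →
      LinearMap.range f = LinearMap.ker g → A ∈ X → C ∈ X → B ∈ X) ∧
    (∀ (A B C : ModuleCat.{0} R) (f : A →ₗ[R] B) (g : B →ₗ[R] C),
      Module.Finite R ↥A → Module.Finite R ↥B → Module.Finite R ↥C →
      Function.Injective f → Function.Surjective g →
      LinearMap.range f = LinearMap.ker g → B ∈ X → C ∈ X → A ∈ X) := by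
  constructor
  · intro A B C f g hA hB hC hf hg hfg hAX hCX
    have mcmA := hmem A hAX
    have mcmC := hmem C hCX
    have : Module.Finite R ↥A := mcmA.1
    have : Module.Finite R ↥B := hB
    have : Module.Finite R ↥C := mcmC.1
    have hexact : Function.Exact f g := LinearMap.exact_iff.mpr hfg.symm
    have hmd : mdepth R ↥A ⊓ mdepth R ↥C ≤ mdepth R ↥B := by
      apply enat_le_of_forall
      intro n hn
      exact hasSeq_le_mdepth (hasSeq_middle n ↥A ↥B ↥C f g hf hg hexact
        (hasSeq_of_le_mdepth (hn.trans inf_le_left))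
        (hasSeq_of_le_mdepth (hn.trans inf_le_right)))
    have mcmB : IsMCM R ↥B := by
      refine ⟨hB, le_trans (le_inf mcmA.2 mcmC.2) ?_⟩
      rw [← WithBot.coe_inf]
      exact_mod_cast hmd
    exact (hthick A B C f g mcmA mcmB mcmC hf hg hfg).2.1 ⟨hAX, hCX⟩
  · intro A B C f g hA hB hC hf hg hfg hBX hCX
    have mcmB := hmem B hBX
    have mcmC := hmem C hCX
    have : Module.Finite R ↥A := hA
    have : Module.Finite R ↥B := mcmB.1
    have : Module.Finite R ↥C := mcmC.1
    have hexact : Function.Exact f g := LinearMap.exact_iff.mpr hfg.symm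
    have hmd : mdepth R ↥B ⊓ mdepth R ↥C ≤ mdepth R ↥A := by
      apply enat_le_of_forall
      intro n hn
      exact hasSeq_le_mdepth (hasSeq_kernel n ↥A ↥B ↥C f g hf hg hexact
        (hasSeq_of_le_mdepth (hn.trans inf_le_left))
        (HasSeq.mono (Nat.sub_le n 1) (hasSeq_of_le_mdepth (hn.trans inf_le_right))))
    have mcmA : IsMCM R ↥A := by
      refine ⟨hA, le_trans (le_inf mcmB.2 mcmC.2) ?_⟩
      rw [← WithBot.coe_inf]
      exact_mod_cast hmd
    exact (hthick A B C f g mcmA mcmB mcmC hf hg hfg).2.2 ⟨hBX, hCX⟩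
end
end

section
/- Let R be a commutative Noetherian local ring, X a resolving subcategory of finitely generated R-modules, and p a prime ideal. Suppose M is a finitely generated R-module such that M_p lies in the additive closure add_{R_p}(X_p) of the localizations of modules in X. Then there exists a short exact sequence 0 → N → X' → M → 0 of finitely generated R-modules with X' ∈ X such that the localized sequence 0 → N_p → X'_p → M_p → 0 splits. -/
open CategoryTheory IsLocalRing

noncomputable section

open Finset in
theorem isLocalizedModule_pi' {R : Type*} [CommRing R] (S : Submonoid R) {ι : Type*} [Fintype ι]
    [DecidableEq ι]
    {M : ι → Type*} [∀ i, AddCommGroup (M i)] [∀ i, Module R (M i)]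
    {M' : ι → Type*} [∀ i, AddCommGroup (M' i)] [∀ i, Module R (M' i)]
    (f : ∀ i, M i →ₗ[R] M' i) [∀ i, IsLocalizedModule S (f i)] :
    IsLocalizedModule S (LinearMap.pi (fun i => (f i) ∘ₗ LinearMap.proj i)) := by
  constructor
  · intro s
    rw [Module.End.isUnit_iff]
    have H := fun i => (Module.End.isUnit_iff _).mp (IsLocalizedModule.map_units (f i) s)
    constructor
    · intro a b hab
      funext i
      exact (H i).1 (by simpa [Module.algebraMap_end_apply] using congrFun hab i)
    · intro b
      choose c hc using fun i => (H i).2 (b i)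
      refine ⟨c, funext fun i => ?_⟩
      simpa [Module.algebraMap_end_apply] using hc i
  · intro y
    choose q hq using fun i => IsLocalizedModule.surj S (f i) (y i)
    refine ⟨⟨fun i => (∏ j ∈ univ.erase i, ((q j).2 : R)) • (q i).1, ∏ j, (q j).2⟩, ?_⟩
    funext i
    have h1 : ((∏ j, (q j).2 : S) • y) i
        = ((∏ j ∈ univ.erase i, ((q j).2 : R)) * ((q i).2 : R)) • y i := by
      rw [← Finset.prod_erase_mul _ _ (Finset.mem_univ i)]
      simp [Submonoid.smul_def, Pi.smul_apply, Submonoid.coe_finset_prod]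
    rw [h1, mul_smul, LinearMap.pi_apply, LinearMap.comp_apply, LinearMap.proj_apply, map_smul]
    congr 1
    simpa [Submonoid.smul_def] using hq i
  · intro x₁ x₂ hx
    have h : ∀ i, ∃ s : S, s • x₁ i = s • x₂ i := fun i =>
      IsLocalizedModule.exists_of_eq (S := S) (f := f i) (by simpa using congrFun hx i)
    choose c hc using h
    refine ⟨∏ i, c i, funext fun i => ?_⟩
    have : (∏ j, c j) = (∏ j ∈ univ.erase i, c j) * c i :=
      (Finset.prod_erase_mul _ _ (Finset.mem_univ i)).symm
    simp only [Pi.smul_apply, this, mul_smul, hc i]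

/-- cons linear equivalence for pi types over `Fin (k+1)` -/
def linearEquivPiFinSucc {R : Type*} [Semiring R] {k : ℕ} (W : Fin (k + 1) → Type*)
    [∀ i, AddCommMonoid (W i)] [∀ i, Module R (W i)] :
    (W 0 × ∀ i : Fin k, W i.succ) ≃ₗ[R] (∀ i, W i) where
  toFun p := Fin.cons p.1 p.2
  invFun v := (v 0, fun i => v i.succ)
  map_add' p q := by
    funext i
    refine Fin.cases ?_ (fun j => ?_) i <;> simp
  map_smul' r p := by
    funext i
    refine Fin.cases ?_ (fun j => ?_) i <;> simp
  left_inv p := by simp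
  right_inv v := by
    funext i
    refine Fin.cases ?_ (fun j => ?_) i <;> simp

theorem pi_mem_aux (R : Type) [CommRing R] (S : Set (ModuleCat.{0} R))
    (hiso : ∀ A B : ModuleCat.{0} R, A ∈ S → Nonempty (A ≃ₗ[R] B) → B ∈ S)
    (hR : ModuleCat.of R R ∈ S)
    (hsummand : ∀ A B C : ModuleCat.{0} R, A ∈ S →
      Nonempty (A ≃ₗ[R] (↥B × ↥C)) → B ∈ S)
    (hext : ∀ (A B C : ModuleCat.{0} R) (f : A →ₗ[R] B) (g : B →ₗ[R] C),
      Function.Injective f → Function.Surjective g →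
      LinearMap.range f = LinearMap.ker g → A ∈ S → C ∈ S → B ∈ S) :
    ∀ (k : ℕ) (V : Fin k → ModuleCat.{0} R), (∀ i, V i ∈ S) →
      ModuleCat.of R (∀ i, ↥(V i)) ∈ S := by
  intro k
  induction k with
  | zero =>
    intro V _
    refine hsummand (ModuleCat.of R R) (ModuleCat.of R (∀ i, ↥(V i))) (ModuleCat.of R R) hR
      ⟨LinearEquiv.symm (LinearEquiv.ofLinear (LinearMap.snd R _ R)
        (LinearMap.prod 0 LinearMap.id) (by ext; rfl)
        (LinearMap.ext fun x => Prod.ext (funext fun i => i.elim0) rfl))⟩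
  | succ k IH =>
    intro V hV
    have htail : ModuleCat.of R (∀ i : Fin k, ↥(V i.succ)) ∈ S := IH _ (fun i => hV i.succ)
    have hprod : ModuleCat.of R (↥(V 0) × ∀ i : Fin k, ↥(V i.succ)) ∈ S := by
      refine hext (V 0) (ModuleCat.of R (↥(V 0) × ∀ i : Fin k, ↥(V i.succ)))
        (ModuleCat.of R (∀ i : Fin k, ↥(V i.succ)))
        (LinearMap.inl R _ _) (LinearMap.snd R _ _)
        LinearMap.inl_injective ?_ (LinearMap.range_inl R _ _) (hV 0) htail
      exact fun x => ⟨(0, x), rfl⟩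
    exact hiso _ _ hprod ⟨linearEquivPiFinSucc (fun i => ↥(V i))⟩

/-- if `X` is a resolving subcategory and `M_p` lies in
`add_{R_p}(X_p)`, then there is a short exact sequence `0 → N → X' → M → 0`
with `X' ∈ X` which splits after localizing at `p`. -/
theorem exists_ses_splitting_at_prime_of_localization_in_add
    (R : Type) [CommRing R] [IsLocalRing R] [IsNoetherianRing R]
    (S : Set (ModuleCat.{0} R))
    (hfg : ∀ A ∈ S, Module.Finite R ↥A)
    (hiso : ∀ A B : ModuleCat.{0} R, A ∈ S → Nonempty (A ≃ₗ[R] B) → B ∈ S)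
    (hR : ModuleCat.of R R ∈ S)
    (hsummand : ∀ A B C : ModuleCat.{0} R, A ∈ S →
      Nonempty (A ≃ₗ[R] (↥B × ↥C)) → B ∈ S)
    (hext : ∀ (A B C : ModuleCat.{0} R) (f : A →ₗ[R] B) (g : B →ₗ[R] C),
      Function.Injective f → Function.Surjective g →
      LinearMap.range f = LinearMap.ker g → A ∈ S → C ∈ S → B ∈ S)
    (hker : ∀ (A B C : ModuleCat.{0} R) (f : A →ₗ[R] B) (g : B →ₗ[R] C),
      Function.Injective f → Function.Surjective g →
      LinearMap.range f = LinearMap.ker g → B ∈ S → C ∈ S → A ∈ S)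
    (p : Ideal R) [p.IsPrime]
    (M : Type) [AddCommGroup M] [Module R M] [Module.Finite R M]
    (hMp : ∃ (k : ℕ) (Xs : Fin k → ModuleCat.{0} R), (∀ i, Xs i ∈ S) ∧
      ∃ L : ModuleCat.{0} (Localization p.primeCompl),
        Nonempty ((Π i, LocalizedModule p.primeCompl ↥(Xs i))
          ≃ₗ[Localization p.primeCompl]
            ((LocalizedModule p.primeCompl M) × ↥L))) :
    ∃ (X' : ModuleCat.{0} R), X' ∈ S ∧
      ∃ (N : ModuleCat.{0} R) (u : ↥N →ₗ[R] ↥X') (v : ↥X' →ₗ[R] M),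
        Function.Injective u ∧ Function.Surjective v ∧
        LinearMap.range u = LinearMap.ker v ∧
        ∃ h : LocalizedModule p.primeCompl M →ₗ[Localization p.primeCompl]
            LocalizedModule p.primeCompl ↥X',
          (LocalizedModule.map p.primeCompl v) ∘ₗ h = LinearMap.id := by
  classical
  obtain ⟨k, Xs, hXsS, L, ⟨e0⟩⟩ := hMp
  let X : Type := ∀ i : Fin k, ↥(Xs i)
  haveI : ∀ i, Module.Finite R ↥(Xs i) := fun i => hfg _ (hXsS i)
  haveI : Module.Finite R X := Module.Finite.pi
  haveI : Module.FinitePresentation R X := Module.finitePresentation_of_finite R X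
  let piMk : X →ₗ[R] (∀ i, LocalizedModule p.primeCompl ↥(Xs i)) :=
    LinearMap.pi (fun i => (LocalizedModule.mkLinearMap p.primeCompl ↥(Xs i)) ∘ₗ LinearMap.proj i)
  haveI : IsLocalizedModule p.primeCompl piMk := isLocalizedModule_pi' p.primeCompl _
  let π0 : (∀ i, LocalizedModule p.primeCompl ↥(Xs i)) →ₗ[R] LocalizedModule p.primeCompl M :=
    ((LinearMap.fst (Localization p.primeCompl) (LocalizedModule p.primeCompl M) ↥L) ∘ₗ e0.toLinearMap).restrictScalars R
  obtain ⟨φ, s, hφ⟩ := Module.FinitePresentation.exists_lift_of_isLocalizedModule p.primeCompl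
    (LocalizedModule.mkLinearMap p.primeCompl M) (π0 ∘ₗ piMk)
  obtain ⟨n, f₀, hf₀⟩ := Module.Finite.exists_fin' R M
  let XF : Type := X × (Fin n → R)
  let v : XF →ₗ[R] M := φ.coprod f₀
  have hvsurj : Function.Surjective v := fun m => by
    obtain ⟨r, hr⟩ := hf₀ m
    exact ⟨(0, r), by rw [LinearMap.coprod_apply, map_zero, zero_add, hr]⟩
  -- membership of X' = X × R^n in S
  have hXmem : ModuleCat.of R X ∈ S := pi_mem_aux R S hiso hR hsummand hext k Xs hXsS
  have hFmem : ModuleCat.of R (Fin n → R) ∈ S := by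
    have h1 := pi_mem_aux R S hiso hR hsummand hext n (fun _ => ModuleCat.of R R) (fun _ => hR)
    exact hiso _ _ h1 ⟨LinearEquiv.refl R _⟩
  have hX'mem : ModuleCat.of R XF ∈ S := by
    refine hext (ModuleCat.of R X) (ModuleCat.of R XF) (ModuleCat.of R (Fin n → R))
      (LinearMap.inl R _ _) (LinearMap.snd R _ _) LinearMap.inl_injective
      (fun x => ⟨(0, x), rfl⟩) (LinearMap.range_inl R _ _) hXmem hFmem
  -- the splitting after localization
  let j : (∀ i, LocalizedModule p.primeCompl ↥(Xs i)) →ₗ[R] LocalizedModule p.primeCompl XF :=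
    IsLocalizedModule.map p.primeCompl piMk (LocalizedModule.mkLinearMap p.primeCompl XF)
      (LinearMap.inl R X (Fin n → R))
  let σ0 : LocalizedModule p.primeCompl M →ₗ[R] (∀ i, LocalizedModule p.primeCompl ↥(Xs i)) :=
    (e0.symm.toLinearMap ∘ₗ (LinearMap.inl (Localization p.primeCompl) (LocalizedModule p.primeCompl M) ↥L)).restrictScalars R
  have iu := IsLocalizedModule.map_units (LocalizedModule.mkLinearMap p.primeCompl XF) s
  let h0 : LocalizedModule p.primeCompl M →ₗ[R] LocalizedModule p.primeCompl XF :=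
    (↑iu.unit⁻¹ : Module.End R _) ∘ₗ (j ∘ₗ σ0)
  have key : ((LocalizedModule.map p.primeCompl v).restrictScalars R) ∘ₗ j = s • π0 := by
    apply IsLocalizedModule.ext p.primeCompl piMk
      (IsLocalizedModule.map_units (LocalizedModule.mkLinearMap p.primeCompl M))
    refine LinearMap.ext fun x => ?_
    have hjx : j (piMk x) = LocalizedModule.mk ((x, 0) : XF) 1 :=
      LinearMap.congr_fun
        (IsLocalizedModule.map_comp p.primeCompl piMk
          (LocalizedModule.mkLinearMap p.primeCompl XF) (LinearMap.inl R X (Fin n → R))) x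
    have hφx := LinearMap.congr_fun hφ x
    simp only [LinearMap.comp_apply, LinearMap.coe_restrictScalars, LinearMap.smul_apply,
      LocalizedModule.mkLinearMap_apply] at hφx ⊢
    rw [hjx, LocalizedModule.map_mk]
    have hv0 : v ((x, 0) : XF) = φ x := by
      show φ.coprod f₀ (x, 0) = φ x
      rw [LinearMap.coprod_apply, map_zero, add_zero]
    rw [hv0]
    exact hφx
  refine ⟨ModuleCat.of R XF, hX'mem, ModuleCat.of R ↥(LinearMap.ker v),
    (LinearMap.ker v).subtype, v, Submodule.injective_subtype _, hvsurj,
    Submodule.range_subtype _, h0.extendScalarsOfIsLocalization p.primeCompl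
      (Localization p.primeCompl), ?_⟩
  refine LinearMap.ext fun y => ?_
  have hs := (Module.End.isUnit_iff _).mp
    (IsLocalizedModule.map_units (LocalizedModule.mkLinearMap p.primeCompl M) s)
  apply hs.injective
  rw [Module.algebraMap_end_apply, Module.algebraMap_end_apply]
  have h2 : (s : R) • h0 y = j (σ0 y) := by
    have h5 := Module.End.isUnit_apply_inv_apply_of_isUnit iu (j (σ0 y))
    rw [Module.algebraMap_end_apply] at h5
    exact h5
  have h4 : π0 (σ0 y) = y := by simp [π0, σ0]
  have h3 := LinearMap.congr_fun key (σ0 y)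
  calc (s : R) • ((LocalizedModule.map p.primeCompl v) ∘ₗ
        (h0.extendScalarsOfIsLocalization p.primeCompl (Localization p.primeCompl))) y
      = (LocalizedModule.map p.primeCompl v) ((s : R) • h0 y) :=
        ((LocalizedModule.map p.primeCompl v).map_smul_of_tower _ _).symm
    _ = (LocalizedModule.map p.primeCompl v) (j (σ0 y)) := by rw [h2]
    _ = (s : R) • (LinearMap.id (R := Localization p.primeCompl)) y := by
        simpa [LinearMap.comp_apply, h4, Submonoid.smul_def] using h3
end
end
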